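/- arXiv:1102.1451 — 2 statements merged into one kernel-verified Lean document; each statement's English description precedes it below -/
import Mathlib

section
/- Let S be an ordered semigroup satisfying axioms O1–O5, and let α and β be functionals on S. Then α(s) ≤ β(s) for all s ∈ S if and only if there exists a functional γ on S such that α + γ = β (pointwise). -/
open scoped ENNReal

/-- `CC s t` : `s` is (sequentially) compactly contained in `t`, written `s ≪ t`. -/
def CC {S : Type*} [AddCommMonoid S] [PartialOrder S] (s t : S) : Prop :=
  ∀ u : ℕ → S, Monotone u → ∀ x : S, IsLUB (Set.range u) x → t ≤ x → ∃ n, s ≤ u n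

/-- An ordered semigroup (positive, with translation invariant order) satisfying axioms O1-O5. -/
structure CuO5 (S : Type*) [AddCommMonoid S] [PartialOrder S] : Prop where
  addRightMono : ∀ {s t : S}, s ≤ t → ∀ r : S, s + r ≤ t + r
  zeroLe : ∀ s : S, 0 ≤ s
  O1 : ∀ u : ℕ → S, Monotone u → ∃ x : S, IsLUB (Set.range u) x
  O2 : ∀ s : S, ∃ u : ℕ → S, (∀ n, CC (u n) (u (n + 1))) ∧ IsLUB (Set.range u) s
  O3 : ∀ {s₁ t₁ s₂ t₂ : S}, CC s₁ t₁ → CC s₂ t₂ → CC (s₁ + s₂) (t₁ + t₂)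
  O4 : ∀ u v : ℕ → S, Monotone u → Monotone v → ∀ x y : S,
    IsLUB (Set.range u) x → IsLUB (Set.range v) y →
    IsLUB (Set.range fun n => u n + v n) (x + y)
  O5 : ∀ {s' s t : S}, CC s' s → s ≤ t → ∃ r : S, s' + r ≤ t ∧ t ≤ s + r

/-- Axioms O1-O6. -/
structure CuO6 (S : Type*) [AddCommMonoid S] [PartialOrder S] extends CuO5 S : Prop where
  O6 : ∀ {s r t : S}, s ≤ r + t → ∀ {s' : S}, CC s' s →
    ∃ r' t' : S, s' ≤ r' + t' ∧ r' ≤ r ∧ r' ≤ s ∧ t' ≤ t ∧ t' ≤ s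

/-- A functional on `S`: additive, order preserving, zero preserving map to `[0,∞]`
preserving suprema of increasing sequences. -/
structure IsFunctional {S : Type*} [AddCommMonoid S] [PartialOrder S] (l : S → ℝ≥0∞) : Prop where
  map_zero : l 0 = 0
  map_add : ∀ s t : S, l (s + t) = l s + l t
  mono : ∀ {s t : S}, s ≤ t → l s ≤ l t
  map_sup : ∀ u : ℕ → S, Monotone u → ∀ x : S, IsLUB (Set.range u) x → l x = ⨆ n, l (u n)

/-- Real multiplication on `S` : a map `(0,∞] × S → S` additive, order preserving and
sup-(of increasing sequences)-preserving in each variable, with `1 · s = s`.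
Scalars are elements of `ℝ≥0∞` required to be positive. -/
structure RealMul (S : Type*) [AddCommMonoid S] [PartialOrder S] where
  smul : ℝ≥0∞ → S → S
  add_left : ∀ {a b : ℝ≥0∞}, 0 < a → 0 < b → ∀ s : S, smul (a + b) s = smul a s + smul b s
  add_right : ∀ {a : ℝ≥0∞}, 0 < a → ∀ s t : S, smul a (s + t) = smul a s + smul a t
  mono_left : ∀ {a b : ℝ≥0∞}, 0 < a → a ≤ b → ∀ s : S, smul a s ≤ smul b s
  mono_right : ∀ {a : ℝ≥0∞}, 0 < a → ∀ {s t : S}, s ≤ t → smul a s ≤ smul a t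
  sup_left : ∀ u : ℕ → ℝ≥0∞, Monotone u → 0 < u 0 → ∀ s : S,
    IsLUB (Set.range fun n => smul (u n) s) (smul (⨆ n, u n) s)
  sup_right : ∀ {a : ℝ≥0∞}, 0 < a → ∀ u : ℕ → S, Monotone u → ∀ x : S,
    IsLUB (Set.range u) x → IsLUB (Set.range fun n => smul a (u n)) (smul a x)
  one_smul : ∀ s : S, smul 1 s = s

/-- `D` is a dense subset of `S`: every element of `S` is the supremum of a rapidly
increasing sequence of elements of `D`. -/
def IsDenseSub {S : Type*} [AddCommMonoid S] [PartialOrder S] (D : Set S) : Prop :=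
  ∀ s : S, ∃ u : ℕ → S, (∀ n, u n ∈ D) ∧ (∀ n, CC (u n) (u (n + 1))) ∧ IsLUB (Set.range u) s

/-- `m` is the least upper bound of the functionals `l₁` and `l₂` in `F(S)`
(pointwise order). -/
def IsFSup {S : Type*} [AddCommMonoid S] [PartialOrder S] (l₁ l₂ m : S → ℝ≥0∞) : Prop :=
  IsFunctional m ∧ (∀ s, l₁ s ≤ m s) ∧ (∀ s, l₂ s ≤ m s) ∧
    ∀ d : S → ℝ≥0∞, IsFunctional d → (∀ s, l₁ s ≤ d s) → (∀ s, l₂ s ≤ d s) → ∀ s, m s ≤ d s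

/-- `m` is the greatest lower bound of the functionals `l₁` and `l₂` in `F(S)`
(pointwise order). -/
def IsFInf {S : Type*} [AddCommMonoid S] [PartialOrder S] (l₁ l₂ m : S → ℝ≥0∞) : Prop :=
  IsFunctional m ∧ (∀ s, m s ≤ l₁ s) ∧ (∀ s, m s ≤ l₂ s) ∧
    ∀ d : S → ℝ≥0∞, IsFunctional d → (∀ s, d s ≤ l₁ s) → (∀ s, d s ≤ l₂ s) → ∀ s, d s ≤ m s

/-- An isomorphism of ordered semigroups between `S` and the extended natural numbers. -/
def IsOrdSemigroupIso {S : Type*} [AddCommMonoid S] [PartialOrder S] (e : S ≃ ℕ∞) : Prop :=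
  (∀ a b : S, e (a + b) = e a + e b) ∧ e 0 = 0 ∧ ∀ a b : S, a ≤ b ↔ e a ≤ e b
set_option linter.unusedSectionVars false

namespace CuAux

variable {S : Type*} [AddCommMonoid S] [PartialOrder S]

lemma add_le_add' (hS : CuO5 S) {x y z w : S} (h1 : x ≤ y) (h2 : z ≤ w) : x + z ≤ y + w := by
  calc x + z ≤ y + z := hS.addRightMono h1 z
  _ = z + y := add_comm _ _
  _ ≤ w + y := hS.addRightMono h2 y
  _ = y + w := add_comm _ _

lemma add_le_add_left' (hS : CuO5 S) {z w : S} (x : S) (h : z ≤ w) : x + z ≤ x + w :=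
  add_le_add' hS le_rfl h

lemma le_add_right' (hS : CuO5 S) (v w : S) : v ≤ v + w := by
  have := add_le_add_left' hS v (hS.zeroLe w)
  simpa using this

lemma le_add_left' (hS : CuO5 S) (v w : S) : v ≤ w + v := by
  rw [add_comm]; exact le_add_right' hS v w

lemma nsmul_le_nsmul' (hS : CuO5 S) {x y : S} (k : ℕ) (h : x ≤ y) : k • x ≤ k • y := by
  induction k with
  | zero => simp
  | succ n ih =>
    rw [succ_nsmul, succ_nsmul]
    exact add_le_add' hS ih h

/-- A partial additive, "guarded-monotone" extension of `β - α` beyond the set where `α` is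
finite. -/
structure GoodExt (α β : S → ℝ≥0∞) (T : Set S) (h : S → ℝ≥0∞) : Prop where
  memD : ∀ v : S, α v ≠ ⊤ → v ∈ T
  eqD : ∀ v : S, α v ≠ ⊤ → α v + h v = β v
  zero_mem : (0:S) ∈ T
  add_mem : ∀ {x y : S}, x ∈ T → y ∈ T → x + y ∈ T
  map_add : ∀ {x y : S}, x ∈ T → y ∈ T → h (x + y) = h x + h y
  map_zero : h 0 = 0
  mono : ∀ {x y : S}, x ∈ T → y ∈ T → ∀ z : S, x + z ≤ y + z →
    (∃ w, w ∈ T ∧ z ≤ w ∧ h w ≠ ⊤) → h x ≤ h y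

namespace GoodExt

variable {α β : S → ℝ≥0∞} {T : Set S} {h : S → ℝ≥0∞}

lemma nsmul_mem (G : GoodExt α β T h) {x : S} (hx : x ∈ T) (k : ℕ) : k • x ∈ T := by
  induction k with
  | zero => simpa using G.zero_mem
  | succ n ih => rw [succ_nsmul]; exact G.add_mem ih hx

lemma map_nsmul (G : GoodExt α β T h) {x : S} (hx : x ∈ T) (k : ℕ) :
    h (k • x) = (k : ℝ≥0∞) * h x := by
  induction k with
  | zero => simpa using G.map_zero
  | succ n ih =>
    rw [succ_nsmul, G.map_add (G.nsmul_mem hx n) hx, ih]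
    push_cast
    ring

end GoodExt

/-- One-step extension of a good partial extension by an arbitrary element `a`. -/
lemma goodExt_extend (hS : CuO5 S) {α β : S → ℝ≥0∞} {T : Set S} {h : S → ℝ≥0∞}
    (G : GoodExt α β T h) (a : S) :
    ∃ (T' : Set S) (h' : S → ℝ≥0∞), GoodExt α β T' h' ∧ T ⊆ T' ∧ a ∈ T' ∧
      ∀ v ∈ T, h' v = h v := by
  classical
  -- The key choice of the value `c` to be assigned to `a`.
  obtain ⟨c, K2⟩ : ∃ c : ℝ≥0∞, ∀ x y z : S, ∀ I J : ℕ, x ∈ T → y ∈ T →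
      x + I • a + z ≤ y + J • a + z →
      (∃ (w : S) (N : ℕ), w ∈ T ∧ z ≤ w + N • a ∧ h w + (N : ℝ≥0∞) * c ≠ ⊤) →
      h x + (I : ℝ≥0∞) * c ≤ h y + (J : ℝ≥0∞) * c := by
    by_cases hbex : ∃ b, b ∈ T ∧ a ≤ b ∧ h b ≠ ⊤
    · -- Case 1 : `a` is dominated by an element of finite value.
      obtain ⟨b, hbT, hab, hbfin⟩ := hbex
      -- the set of lower constraints
      set LC : Set (S × S × ℕ) := {q | q.1 ∈ T ∧ q.2.1 ∈ T ∧ q.2.2 ≠ 0 ∧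
        ∃ z w, w ∈ T ∧ z ≤ w ∧ h w ≠ ⊤ ∧ q.1 + z ≤ q.2.1 + q.2.2 • a + z} with hLCdef
      set c : ℝ≥0∞ := ⨆ q : LC, (h q.1.1 - h q.1.2.1) / (q.1.2.2 : ℝ≥0∞) with hcdef
      -- the combination lemma
      have Lcomb : ∀ x y z w : S, ∀ m : ℕ, x ∈ T → y ∈ T → w ∈ T → z ≤ w → h w ≠ ⊤ →
          x + m • a + z ≤ y + z →
          ∀ x₁ y₁ z₁ w₁ : S, ∀ m₁ : ℕ, x₁ ∈ T → y₁ ∈ T → w₁ ∈ T → z₁ ≤ w₁ → h w₁ ≠ ⊤ →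
          x₁ + z₁ ≤ y₁ + m₁ • a + z₁ →
          (m₁ : ℝ≥0∞) * h x + (m : ℝ≥0∞) * h x₁ ≤ (m₁ : ℝ≥0∞) * h y + (m : ℝ≥0∞) * h y₁ := by
        intro x y z w m hx hy hw hzw hwfin hupper x₁ y₁ z₁ w₁ m₁ hx₁ hy₁ hw₁ hzw₁ hw₁fin hlower
        have s1 : m₁ • (x + m • a + z) ≤ m₁ • (y + z) := nsmul_le_nsmul' hS m₁ hupper
        have s2 : m • (x₁ + z₁) ≤ m • (y₁ + m₁ • a + z₁) := nsmul_le_nsmul' hS m hlower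
        have stot : m₁ • (x + m • a + z) + m • (x₁ + z₁) ≤
            m₁ • (y + z) + m • (y₁ + m₁ • a + z₁) := add_le_add' hS s1 s2
        have hLrw : m₁ • (x + m • a + z) + m • (x₁ + z₁) =
            (m₁ • x + m • x₁) + (m₁ • (m • a) + (m₁ • z + m • z₁)) := by
          simp only [nsmul_add]; abel
        have hRrw : m₁ • (y + z) + m • (y₁ + m₁ • a + z₁) =
            (m₁ • y + m • y₁) + (m₁ • (m • a) + (m₁ • z + m • z₁)) := by
          have hsw : m • (m₁ • a) = m₁ • (m • a) := by
            rw [← mul_nsmul, ← mul_nsmul, mul_comm]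
          simp only [nsmul_add]
          rw [hsw]; abel
        rw [hLrw, hRrw] at stot
        have hXmem : m₁ • x + m • x₁ ∈ T := G.add_mem (G.nsmul_mem hx m₁) (G.nsmul_mem hx₁ m)
        have hYmem : m₁ • y + m • y₁ ∈ T := G.add_mem (G.nsmul_mem hy m₁) (G.nsmul_mem hy₁ m)
        have hguard : ∃ W, W ∈ T ∧ (m₁ • (m • a) + (m₁ • z + m • z₁)) ≤ W ∧ h W ≠ ⊤ := by
          refine ⟨m₁ • (m • b) + (m₁ • w + m • w₁), ?_, ?_, ?_⟩
          · exact G.add_mem (G.nsmul_mem (G.nsmul_mem hbT m) m₁)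
              (G.add_mem (G.nsmul_mem hw m₁) (G.nsmul_mem hw₁ m))
          · exact add_le_add' hS (nsmul_le_nsmul' hS m₁ (nsmul_le_nsmul' hS m hab))
              (add_le_add' hS (nsmul_le_nsmul' hS m₁ hzw) (nsmul_le_nsmul' hS m hzw₁))
          · rw [G.map_add (G.nsmul_mem (G.nsmul_mem hbT m) m₁)
                (G.add_mem (G.nsmul_mem hw m₁) (G.nsmul_mem hw₁ m)),
              G.map_add (G.nsmul_mem hw m₁) (G.nsmul_mem hw₁ m),
              G.map_nsmul (G.nsmul_mem hbT m) m₁, G.map_nsmul hbT m,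
              G.map_nsmul hw m₁, G.map_nsmul hw₁ m]
            exact ENNReal.add_ne_top.mpr ⟨ENNReal.mul_ne_top (ENNReal.natCast_ne_top m₁)
                (ENNReal.mul_ne_top (ENNReal.natCast_ne_top m) hbfin),
              ENNReal.add_ne_top.mpr ⟨ENNReal.mul_ne_top (ENNReal.natCast_ne_top m₁) hwfin,
                ENNReal.mul_ne_top (ENNReal.natCast_ne_top m) hw₁fin⟩⟩
        have := G.mono hXmem hYmem _ stot hguard
        rwa [G.map_add (G.nsmul_mem hx m₁) (G.nsmul_mem hx₁ m),
          G.map_add (G.nsmul_mem hy m₁) (G.nsmul_mem hy₁ m),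
          G.map_nsmul hx m₁, G.map_nsmul hx₁ m, G.map_nsmul hy m₁, G.map_nsmul hy₁ m] at this
      -- c is bounded by h b
      have hcb : c ≤ h b := by
        rw [hcdef]
        refine iSup_le ?_
        rintro ⟨⟨x₁, y₁, m₁⟩, hx₁, hy₁, hm₁, z₁, w₁, hw₁, hzw₁, hw₁fin, hlower⟩
        have hub : (0:S) + (1:ℕ) • a + 0 ≤ b + 0 := by
          simpa using hab
        have := Lcomb 0 b 0 0 1 G.zero_mem hbT G.zero_mem le_rfl
          (by rw [G.map_zero]; exact ENNReal.zero_ne_top) hub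
          x₁ y₁ z₁ w₁ m₁ hx₁ hy₁ hw₁ hzw₁ hw₁fin hlower
        rw [G.map_zero] at this
        simp only [Nat.cast_one, one_mul, mul_zero, add_zero, zero_add] at this
        -- this : h x₁ ≤ m₁ * h b + h y₁
        have hsub : h x₁ - h y₁ ≤ (m₁ : ℝ≥0∞) * h b := tsub_le_iff_right.mpr this
        rw [ENNReal.div_le_iff_le_mul (Or.inl (by exact_mod_cast hm₁))
          (Or.inl (ENNReal.natCast_ne_top m₁))]
        calc h x₁ - h y₁ ≤ (m₁ : ℝ≥0∞) * h b := hsub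
          _ = h b * (m₁ : ℝ≥0∞) := mul_comm _ _
      have hcfin : c ≠ ⊤ := fun hc => hbfin (top_le_iff.mp (hc ▸ hcb))
      -- use of a lower constraint
      have L4 : ∀ x y : S, ∀ m : ℕ, x ∈ T → y ∈ T → m ≠ 0 →
          (∃ z w, w ∈ T ∧ z ≤ w ∧ h w ≠ ⊤ ∧ x + z ≤ y + m • a + z) →
          h x ≤ h y + m * c := by
        intro x y m hx hy hm hcon
        have hmem : (⟨(x, y, m), hx, hy, hm, hcon⟩ : LC) ∈ Set.univ := Set.mem_univ _
        have hle1 : (h x - h y) / (m : ℝ≥0∞) ≤ c := by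
          rw [hcdef]
          exact le_iSup (fun q : LC => (h q.1.1 - h q.1.2.1) / (q.1.2.2 : ℝ≥0∞))
            ⟨(x, y, m), hx, hy, hm, hcon⟩
        have hsub : h x - h y ≤ (m : ℝ≥0∞) * c := by
          have := mul_le_mul_right hle1 (m : ℝ≥0∞)
          rwa [ENNReal.mul_div_cancel (by exact_mod_cast hm) (ENNReal.natCast_ne_top m)] at this
        calc h x ≤ h y + (h x - h y) := le_add_tsub
          _ ≤ h y + (m : ℝ≥0∞) * c := add_le_add_right hsub _
      -- use of an upper constraint
      have L5 : ∀ x y z w : S, ∀ m : ℕ, x ∈ T → y ∈ T → w ∈ T → z ≤ w → h w ≠ ⊤ →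
          x + m • a + z ≤ y + z → h x + m * c ≤ h y := by
        intro x y z w m hx hy hw hzw hwfin hupper
        by_cases hytop : h y = ⊤
        · rw [hytop]; exact le_top
        have hxy : h x ≤ h y := by
          refine G.mono hx hy (m • a + z) ?_ ⟨m • b + w, G.add_mem (G.nsmul_mem hbT m) hw, ?_, ?_⟩
          · calc x + (m • a + z) = x + m • a + z := by rw [add_assoc]
              _ ≤ y + z := hupper
              _ ≤ y + (m • a + z) := by
                  refine add_le_add_left' hS y ?_
                  exact le_add_left' hS z (m • a)
          · exact add_le_add' hS (nsmul_le_nsmul' hS m hab) hzw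
          · rw [G.map_add (G.nsmul_mem hbT m) hw, G.map_nsmul hbT m]
            exact ENNReal.add_ne_top.mpr
              ⟨ENNReal.mul_ne_top (ENNReal.natCast_ne_top m) hbfin, hwfin⟩
        rcases Nat.eq_zero_or_pos m with hm | hm
        · simpa [hm] using hxy
        have hmne : (m : ℝ≥0∞) ≠ 0 := by exact_mod_cast hm.ne'
        by_cases hne : Nonempty LC
        · rw [hcdef, ENNReal.mul_iSup, ENNReal.add_iSup]
          refine iSup_le ?_
          rintro ⟨⟨x₁, y₁, m₁⟩, hx₁, hy₁, hm₁, z₁, w₁, hw₁, hzw₁, hw₁fin, hlower⟩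
          simp only
          by_cases h0 : h x₁ - h y₁ = 0
          · simp [h0, hxy]
          have hy₁top : h y₁ ≠ ⊤ := by
            intro ht
            exact h0 (by simp [ht, ENNReal.sub_top])
          have hy₁x₁ : h y₁ ≤ h x₁ := by
            by_contra hcon
            exact h0 (tsub_eq_zero_of_le (le_of_not_ge hcon))
          have hstar := Lcomb x y z w m hx hy hw hzw hwfin hupper
            x₁ y₁ z₁ w₁ m₁ hx₁ hy₁ hw₁ hzw₁ hw₁fin hlower
          have hx₁top : h x₁ ≠ ⊤ := by
            intro ht
            have hL : ((m₁ : ℝ≥0∞) * h x + (m : ℝ≥0∞) * h x₁) = ⊤ := by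
              rw [ht, ENNReal.mul_top hmne]; simp
            have hR : ((m₁ : ℝ≥0∞) * h y + (m : ℝ≥0∞) * h y₁) ≠ ⊤ :=
              ENNReal.add_ne_top.mpr ⟨ENNReal.mul_ne_top (ENNReal.natCast_ne_top m₁) hytop,
                ENNReal.mul_ne_top (ENNReal.natCast_ne_top m) hy₁top⟩
            exact hR (top_le_iff.mp (hL ▸ hstar))
          have hm₁ne : (m₁ : ℝ≥0∞) ≠ 0 := by exact_mod_cast hm₁
          rw [← ENNReal.mul_le_mul_iff_right hm₁ne (ENNReal.natCast_ne_top m₁)]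
          have hlhs : (m₁ : ℝ≥0∞) * (h x + (m : ℝ≥0∞) * ((h x₁ - h y₁) / (m₁ : ℝ≥0∞))) =
              (m₁ : ℝ≥0∞) * h x + (m : ℝ≥0∞) * (h x₁ - h y₁) := by
            rw [mul_add]
            congr 1
            rw [← mul_assoc, mul_comm (m₁ : ℝ≥0∞) (m : ℝ≥0∞), mul_assoc,
              ENNReal.mul_div_cancel hm₁ne (ENNReal.natCast_ne_top m₁)]
          rw [hlhs]
          have hmy₁fin : (m : ℝ≥0∞) * h y₁ ≠ ⊤ :=
            ENNReal.mul_ne_top (ENNReal.natCast_ne_top m) hy₁top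
          rw [← ENNReal.add_le_add_iff_right hmy₁fin]
          calc (m₁ : ℝ≥0∞) * h x + (m : ℝ≥0∞) * (h x₁ - h y₁) + (m : ℝ≥0∞) * h y₁
              = (m₁ : ℝ≥0∞) * h x + (m : ℝ≥0∞) * ((h x₁ - h y₁) + h y₁) := by ring
            _ = (m₁ : ℝ≥0∞) * h x + (m : ℝ≥0∞) * h x₁ := by
                rw [tsub_add_cancel_of_le hy₁x₁]
            _ ≤ (m₁ : ℝ≥0∞) * h y + (m : ℝ≥0∞) * h y₁ := hstar
        · have : IsEmpty LC := not_nonempty_iff.mp hne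
          have hc0 : c = 0 := by
            rw [hcdef]
            exact le_antisymm (iSup_le fun q => this.elim q) bot_le
          simpa [hc0] using hxy
      -- now the key property
      refine ⟨c, ?_⟩
      intro x y z I J hx hy hcons hguard
      obtain ⟨w, N, hwT, hzw, hwfin'⟩ := hguard
      have hwfin : h w ≠ ⊤ := fun ht => hwfin' (by rw [ht]; simp)
      -- upgrade the guard to an `a`-free one
      set W : S := w + N • b with hWdef
      have hWT : W ∈ T := G.add_mem hwT (G.nsmul_mem hbT N)
      have hzW : z ≤ W := hzw.trans (add_le_add_left' hS w (nsmul_le_nsmul' hS N hab))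
      have hWfin : h W ≠ ⊤ := by
        rw [hWdef, G.map_add hwT (G.nsmul_mem hbT N), G.map_nsmul hbT N]
        exact ENNReal.add_ne_top.mpr
          ⟨hwfin, ENNReal.mul_ne_top (ENNReal.natCast_ne_top N) hbfin⟩
      rcases le_or_gt J I with hJI | hIJ
      · obtain ⟨m, rfl⟩ : ∃ m, I = m + J := ⟨I - J, (Nat.sub_add_cancel hJI).symm⟩
        have hrw1 : x + (m + J) • a + z = x + m • a + (z + J • a) := by
          rw [add_nsmul]; abel
        have hrw2 : y + J • a + z = y + (z + J • a) := by abel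
        rw [hrw1, hrw2] at hcons
        have hguard2 : z + J • a ≤ W + J • b := add_le_add' hS hzW (nsmul_le_nsmul' hS J hab)
        have hWJT : W + J • b ∈ T := G.add_mem hWT (G.nsmul_mem hbT J)
        have hWJfin : h (W + J • b) ≠ ⊤ := by
          rw [G.map_add hWT (G.nsmul_mem hbT J), G.map_nsmul hbT J]
          exact ENNReal.add_ne_top.mpr
            ⟨hWfin, ENNReal.mul_ne_top (ENNReal.natCast_ne_top J) hbfin⟩
        have := L5 x y (z + J • a) (W + J • b) m hx hy hWJT hguard2 hWJfin hcons
        calc h x + ((m + J : ℕ) : ℝ≥0∞) * c = (h x + (m : ℝ≥0∞) * c) + (J : ℝ≥0∞) * c := by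
              push_cast; ring
          _ ≤ h y + (J : ℝ≥0∞) * c := add_le_add_left this _
      · obtain ⟨m, hm0, rfl⟩ : ∃ m, m ≠ 0 ∧ J = m + I :=
          ⟨J - I, by omega, by omega⟩
        have hrw1 : x + I • a + z = x + (z + I • a) := by abel
        have hrw2 : y + (m + I) • a + z = y + m • a + (z + I • a) := by
          rw [add_nsmul]; abel
        rw [hrw1, hrw2] at hcons
        have hguard2 : z + I • a ≤ W + I • b := add_le_add' hS hzW (nsmul_le_nsmul' hS I hab)
        have hWIT : W + I • b ∈ T := G.add_mem hWT (G.nsmul_mem hbT I)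
        have hWIfin : h (W + I • b) ≠ ⊤ := by
          rw [G.map_add hWT (G.nsmul_mem hbT I), G.map_nsmul hbT I]
          exact ENNReal.add_ne_top.mpr
            ⟨hWfin, ENNReal.mul_ne_top (ENNReal.natCast_ne_top I) hbfin⟩
        have := L4 x y m hx hy hm0 ⟨z + I • a, W + I • b, hWIT, hguard2, hWIfin, hcons⟩
        calc h x + (I : ℝ≥0∞) * c ≤ (h y + (m : ℝ≥0∞) * c) + (I : ℝ≥0∞) * c :=
              add_le_add_left this _
          _ = h y + ((m + I : ℕ) : ℝ≥0∞) * c := by push_cast; ring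
    · -- Case 2 : no bound of finite value; take `c = ⊤`.
      refine ⟨⊤, ?_⟩
      intro x y z I J hx hy hcons hguard
      obtain ⟨w, N, hwT, hzw, hwfin'⟩ := hguard
      have hN : N = 0 := by
        by_contra hN0
        exact hwfin' (by rw [ENNReal.mul_top (by exact_mod_cast hN0)]; simp)
      have hwfin : h w ≠ ⊤ := fun ht => hwfin' (by rw [ht]; simp)
      rw [hN] at hzw
      simp only [zero_nsmul, add_zero] at hzw
      rcases Nat.eq_zero_or_pos J with hJ | hJ
      · subst hJ
        rw [zero_nsmul, add_zero] at hcons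
        rw [Nat.cast_zero, zero_mul, add_zero]
        rcases Nat.eq_zero_or_pos I with hI | hI
        · subst hI
          rw [zero_nsmul, add_zero] at hcons
          rw [Nat.cast_zero, zero_mul, add_zero]
          exact G.mono hx hy z hcons ⟨w, hwT, hzw, hwfin⟩
        · -- I ≥ 1 : then h y = ⊤
          have haI : a ≤ I • a := by
            obtain ⟨I', rfl⟩ : ∃ I', I = I' + 1 := ⟨I - 1, by omega⟩
            rw [succ_nsmul]
            exact le_add_left' hS a (I' • a)
          have hayw : a ≤ y + w := by
            calc a ≤ I • a := haI
              _ ≤ x + I • a + z := (le_add_left' hS (I • a) x).trans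
                  (le_add_right' hS (x + I • a) z)
              _ ≤ y + z := hcons
              _ ≤ y + w := add_le_add_left' hS y hzw
          have hyw : h (y + w) = ⊤ := by
            by_contra hyw
            exact hbex ⟨y + w, G.add_mem hy hwT, hayw, hyw⟩
          rw [G.map_add hy hwT] at hyw
          have hytop : h y = ⊤ := by
            by_contra hy0
            exact (ENNReal.add_ne_top.mpr ⟨hy0, hwfin⟩) hyw
          rw [hytop]
          exact le_top
      · have : h y + (J : ℝ≥0∞) * ⊤ = ⊤ := by
          rw [ENNReal.mul_top (by exact_mod_cast hJ.ne')]; simp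
        rw [this]; exact le_top
  -- Common construction of the extension.
  set T' : Set S := {v | ∃ (u : S) (k : ℕ), u ∈ T ∧ v = u + k • a} with hT'def
  have cons : ∀ u u' : S, ∀ k k' : ℕ, u ∈ T → u' ∈ T → u + k • a = u' + k' • a →
      h u + (k : ℝ≥0∞) * c = h u' + (k' : ℝ≥0∞) * c := by
    intro u u' k k' hu hu' heq
    have hguard : ∃ (w : S) (N : ℕ), w ∈ T ∧ (0:S) ≤ w + N • a ∧ h w + (N : ℝ≥0∞) * c ≠ ⊤ :=
      ⟨0, 0, G.zero_mem, hS.zeroLe _, by rw [G.map_zero]; simp⟩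
    refine le_antisymm ?_ ?_
    · refine K2 u u' 0 k k' hu hu' ?_ hguard
      simp only [add_zero]; exact le_of_eq heq
    · refine K2 u' u 0 k' k hu' hu ?_ hguard
      simp only [add_zero]; exact le_of_eq heq.symm
  set h' : S → ℝ≥0∞ := fun v =>
    if hv : ∃ (u : S) (k : ℕ), u ∈ T ∧ v = u + k • a then
      h hv.choose + (hv.choose_spec.choose : ℝ≥0∞) * c else 0 with hh'def
  have hval : ∀ (v u : S) (k : ℕ), u ∈ T → v = u + k • a →
      h' v = h u + (k : ℝ≥0∞) * c := by
    intro v u k hu hveq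
    have hex : ∃ (u : S) (k : ℕ), u ∈ T ∧ v = u + k • a := ⟨u, k, hu, hveq⟩
    have h1 : h' v = h hex.choose + (hex.choose_spec.choose : ℝ≥0∞) * c := by
      rw [hh'def]
      exact dif_pos hex
    rw [h1]
    exact cons _ _ _ _ hex.choose_spec.choose_spec.1 hu
      (hex.choose_spec.choose_spec.2.symm.trans hveq)
  have hTsub : T ⊆ T' := fun v hv => ⟨v, 0, hv, by simp⟩
  have haT' : a ∈ T' := ⟨0, 1, G.zero_mem, by simp⟩
  have hagree : ∀ v ∈ T, h' v = h v := by
    intro v hv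
    rw [hval v v 0 hv (by simp)]
    simp
  refine ⟨T', h', ?_, hTsub, haT', hagree⟩
  constructor
  · exact fun v hv => hTsub (G.memD v hv)
  · intro v hv
    rw [hagree v (G.memD v hv)]
    exact G.eqD v hv
  · exact hTsub G.zero_mem
  · intro x y hx hy
    obtain ⟨u, k, hu, hxe⟩ := hx
    obtain ⟨u', k', hu', hye⟩ := hy
    exact ⟨u + u', k + k', G.add_mem hu hu', by rw [hxe, hye, add_nsmul]; abel⟩
  · intro x y hx hy
    obtain ⟨u, k, hu, hxe⟩ := hx
    obtain ⟨u', k', hu', hye⟩ := hy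
    rw [hval x u k hu hxe, hval y u' k' hu' hye,
      hval (x + y) (u + u') (k + k') (G.add_mem hu hu')
        (by rw [hxe, hye, add_nsmul]; abel), G.map_add hu hu']
    push_cast
    ring
  · rw [hagree 0 G.zero_mem]; exact G.map_zero
  · intro x y hx hy z hcons hguard
    obtain ⟨u, I, hu, hxe⟩ := hx
    obtain ⟨u', J, hu', hye⟩ := hy
    obtain ⟨wt, hwtT', hzwt, hwtfin⟩ := hguard
    obtain ⟨w, N, hw, hwe⟩ := hwtT'
    rw [hwe] at hzwt
    rw [hval wt w N hw hwe] at hwtfin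
    rw [hval x u I hu hxe, hval y u' J hu' hye]
    refine K2 u u' z I J hu hu' ?_ ⟨w, N, hw, hzwt, hwtfin⟩
    rw [hxe, hye] at hcons
    exact hcons

lemma cc_le {s t : S} (h : CC s t) : s ≤ t := by
  obtain ⟨n, hn⟩ := h (fun _ => t) monotone_const t
    (by rw [Set.range_const]; exact isLUB_singleton) le_rfl
  exact hn

lemma le_cc {s s' t : S} (h : s ≤ s') (h' : CC s' t) : CC s t := by
  intro u hu x hx htx
  obtain ⟨n, hn⟩ := h' u hu x hx htx
  exact ⟨n, h.trans hn⟩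

lemma cc_mono_right {s t t' : S} (h : CC s t) (htt' : t ≤ t') : CC s t' := by
  intro u hu x hx ht'x
  exact h u hu x hx (htt'.trans ht'x)

lemma cc_zero (hS : CuO5 S) (t : S) : CC (0 : S) t :=
  fun u _ _ _ _ => ⟨0, hS.zeroLe (u 0)⟩

lemma rapid_mono {u : ℕ → S} (h : ∀ n, CC (u n) (u (n + 1))) : Monotone u :=
  monotone_nat_of_le_succ fun n => cc_le (h n)

lemma lub_le_of_mem {u : ℕ → S} {s : S} (hlub : IsLUB (Set.range u) s) (n : ℕ) : u n ≤ s :=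
  hlub.1 (Set.mem_range_self n)

lemma rapid_cc {u : ℕ → S} {s : S} (h : ∀ n, CC (u n) (u (n + 1)))
    (hlub : IsLUB (Set.range u) s) (n : ℕ) : CC (u n) s :=
  cc_mono_right (h n) (lub_le_of_mem hlub (n + 1))

/-- Key cross inequality from O5: for `u ≤ v`, `β u + α v ≤ β v + α u`. -/
lemma cross_le (hS : CuO5 S) {α β : S → ℝ≥0∞} (hα : IsFunctional α) (hβ : IsFunctional β)
    (hle : ∀ s, α s ≤ β s) {u v : S} (huv : u ≤ v) : β u + α v ≤ β v + α u := by
  obtain ⟨x, hx, hxlub⟩ := hS.O2 u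
  have hkey : ∀ k, β (x k) + α v ≤ β v + α u := by
    intro k
    have hxk1 : x (k + 1) ≤ v := (lub_le_of_mem hxlub (k + 1)).trans huv
    obtain ⟨c, hc1, hc2⟩ := hS.O5 (hx k) hxk1
    calc β (x k) + α v ≤ β (x k) + (α (x (k + 1)) + α c) := by
          refine add_le_add_right ?_ _
          rw [← hα.map_add]; exact hα.mono hc2
      _ ≤ β (x k) + (α (x (k + 1)) + β c) :=
          add_le_add_right (add_le_add_right (hle c) _) _
      _ = (β (x k) + β c) + α (x (k + 1)) := by ring
      _ = β (x k + c) + α (x (k + 1)) := by rw [hβ.map_add]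
      _ ≤ β v + α (x (k + 1)) := add_le_add_left (hβ.mono hc1) _
      _ ≤ β v + α u := add_le_add_right (hα.mono (lub_le_of_mem hxlub (k + 1))) _
  have hbu : β u = ⨆ k, β (x k) := hβ.map_sup x (rapid_mono hx) u hxlub
  rw [hbu, ENNReal.iSup_add]
  exact iSup_le hkey

/-- Guarded cancellation cross inequality. -/
lemma cross_cancel (hS : CuO5 S) {α β : S → ℝ≥0∞} (hα : IsFunctional α) (hβ : IsFunctional β)
    (hle : ∀ s, α s ≤ β s) {x y z : S} (hxyz : x + z ≤ y + z)
    (hαz : α z ≠ ⊤) (hβz : β z ≠ ⊤) : β x + α y ≤ β y + α x := by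
  obtain ⟨ξ, hξ, hξlub⟩ := hS.O2 x
  obtain ⟨ζ, hζ, hζlub⟩ := hS.O2 z
  have hζm : Monotone ζ := rapid_mono hζ
  have hyzlub : IsLUB (Set.range fun m => y + ζ m) (y + z) :=
    hS.O4 (fun _ => y) ζ monotone_const hζm y z
      (by rw [Set.range_const]; exact isLUB_singleton) hζlub
  have hkey : ∀ j k, β (ξ j) + β (ζ k) + α y ≤ β y + β z + α (ξ j) := by
    intro j k
    have hcc : CC (ξ j + ζ k) (x + z) := hS.O3 (rapid_cc hξ hξlub j) (rapid_cc hζ hζlub k)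
    obtain ⟨m0, hm0⟩ := hcc (fun m => y + ζ m) (fun a b hab => add_le_add_left' hS y (hζm hab))
      (y + z) hyzlub hxyz
    set m := max m0 k with hm
    have hle1 : ξ j + ζ k ≤ y + ζ m := hm0.trans (add_le_add_left' hS y (hζm (le_max_left _ _)))
    have hcross := cross_le hS hα hβ hle hle1
    rw [hβ.map_add, hα.map_add, hβ.map_add, hα.map_add] at hcross
    have h2 : β (ξ j) + β (ζ k) + α y + α (ζ k) ≤ (β y + β z + α (ξ j)) + α (ζ k) := by
      calc β (ξ j) + β (ζ k) + α y + α (ζ k)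
          ≤ β (ξ j) + β (ζ k) + α y + α (ζ m) :=
            add_le_add_right (hα.mono (hζm (le_max_right _ _))) _
        _ = β (ξ j) + β (ζ k) + (α y + α (ζ m)) := by ring
        _ ≤ β y + β (ζ m) + (α (ξ j) + α (ζ k)) := hcross
        _ ≤ β y + β z + (α (ξ j) + α (ζ k)) :=
            add_le_add_left (add_le_add_right (hβ.mono (lub_le_of_mem hζlub m)) _) _
        _ = (β y + β z + α (ξ j)) + α (ζ k) := by ring
    have hαζk : α (ζ k) ≠ ⊤ := by
      intro hc
      exact hαz (top_le_iff.mp (hc ▸ hα.mono (lub_le_of_mem hζlub k)))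
    exact (ENNReal.add_le_add_iff_right hαζk).mp h2
  have hstep1 : ∀ j, β (ξ j) + β z + α y ≤ β y + β z + α (ξ j) := by
    intro j
    have hzsup : (⨆ k, β (ζ k)) = β z := (hβ.map_sup ζ hζm z hζlub).symm
    calc β (ξ j) + β z + α y = β (ξ j) + (⨆ k, β (ζ k)) + α y := by rw [hzsup]
      _ = (⨆ k, β (ξ j) + β (ζ k)) + α y := by rw [ENNReal.add_iSup]
      _ = ⨆ k, (β (ξ j) + β (ζ k) + α y) := by rw [ENNReal.iSup_add]
      _ ≤ β y + β z + α (ξ j) := iSup_le (hkey j)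
  have hstep2 : ∀ j, β (ξ j) + α y ≤ β y + α x := by
    intro j
    have h3 : β (ξ j) + α y + β z ≤ (β y + α (ξ j)) + β z := by
      calc β (ξ j) + α y + β z = β (ξ j) + β z + α y := by ring
        _ ≤ β y + β z + α (ξ j) := hstep1 j
        _ = (β y + α (ξ j)) + β z := by ring
    have h4 := (ENNReal.add_le_add_iff_right hβz).mp h3
    exact h4.trans (add_le_add_right (hα.mono (lub_le_of_mem hξlub j)) _)
  have hbx : β x = ⨆ j, β (ξ j) := hβ.map_sup ξ (rapid_mono hξ) x hξlub
  rw [hbx, ENNReal.iSup_add]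
  exact iSup_le hstep2

/-- The base partial extension: `β - α` on the set where `α` is finite. -/
lemma goodExt_base (hS : CuO5 S) {α β : S → ℝ≥0∞} (hα : IsFunctional α) (hβ : IsFunctional β)
    (hle : ∀ s, α s ≤ β s) :
    GoodExt α β {v | α v ≠ ⊤} (fun v => β v - α v) := by
  constructor
  · exact fun v hv => hv
  · exact fun v _ => add_tsub_cancel_of_le (hle v)
  · show α 0 ≠ ⊤
    rw [hα.map_zero]; exact ENNReal.zero_ne_top
  · intro x y hx hy
    show α (x + y) ≠ ⊤
    rw [hα.map_add]
    exact ENNReal.add_ne_top.mpr ⟨hx, hy⟩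
  · intro x y hx hy
    show β (x + y) - α (x + y) = (β x - α x) + (β y - α y)
    have e1 : ((β x - α x) + (β y - α y)) + (α x + α y) = β x + β y := by
      have h1 : (β x - α x) + α x = β x := tsub_add_cancel_of_le (hle x)
      have h2 : (β y - α y) + α y = β y := tsub_add_cancel_of_le (hle y)
      calc ((β x - α x) + (β y - α y)) + (α x + α y)
          = ((β x - α x) + α x) + ((β y - α y) + α y) := by ring
        _ = β x + β y := by rw [h1, h2]
    rw [hβ.map_add, hα.map_add, ← e1,
      ENNReal.add_sub_cancel_right (ENNReal.add_ne_top.mpr ⟨hx, hy⟩)]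
  · show β 0 - α 0 = 0
    rw [hα.map_zero, hβ.map_zero]; simp
  · intro x y hx hy z hcons hguard
    obtain ⟨w, hw, hzw, hwfin⟩ := hguard
    have hβw : β w ≠ ⊤ := by
      intro ht
      apply hwfin
      show β w - α w = ⊤
      rw [ht]
      exact ENNReal.top_sub hw
    have hαz : α z ≠ ⊤ := ne_top_of_le_ne_top hw (hα.mono hzw)
    have hβz : β z ≠ ⊤ := ne_top_of_le_ne_top hβw (hβ.mono hzw)
    have hcross := cross_cancel hS hα hβ hle hcons hαz hβz
    show β x - α x ≤ β y - α y
    rw [tsub_le_iff_right]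
    have hyy : α y + (β y - α y) = β y := add_tsub_cancel_of_le (hle y)
    have h5 : α y + (β x) ≤ α y + ((β y - α y) + α x) := by
      calc α y + β x = β x + α y := add_comm _ _
        _ ≤ β y + α x := hcross
        _ = (α y + (β y - α y)) + α x := by rw [hyy]
        _ = α y + ((β y - α y) + α x) := by ring
    exact (ENNReal.add_le_add_iff_left hy).mp h5

/-- Zorn: there is a total good extension. -/
lemma exists_total_goodExt (hS : CuO5 S) {α β : S → ℝ≥0∞} (hα : IsFunctional α)
    (hβ : IsFunctional β) (hle : ∀ s, α s ≤ β s) :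
    ∃ g : S → ℝ≥0∞, GoodExt α β Set.univ g := by
  classical
  let P := {p : Set S × (S → ℝ≥0∞) // GoodExt α β p.1 p.2}
  let r : P → P → Prop := fun p q => p.1.1 ⊆ q.1.1 ∧ ∀ v ∈ p.1.1, p.1.2 v = q.1.2 v
  have hrefl : ∀ p : P, r p p := fun p => ⟨subset_rfl, fun v _ => rfl⟩
  have htrans : ∀ {p q s : P}, r p q → r q s → r p s := by
    intro p q s hpq hqs
    exact ⟨hpq.1.trans hqs.1, fun v hv => (hpq.2 v hv).trans (hqs.2 v (hpq.1 hv))⟩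
  have p0 : P := ⟨({v | α v ≠ ⊤}, fun v => β v - α v), goodExt_base hS hα hβ hle⟩
  have hbdd : ∀ c : Set P, IsChain r c → ∃ ub, ∀ p ∈ c, r p ub := by
    intro c hc
    rcases Set.eq_empty_or_nonempty c with hce | hcne
    · exact ⟨p0, by simp [hce]⟩
    obtain ⟨q0, hq0⟩ := hcne
    have htri : ∀ p ∈ c, ∀ q ∈ c, ∃ s ∈ c, r p s ∧ r q s := by
      intro p hp q hq
      by_cases hpq : p = q
      · exact ⟨q, hq, hpq ▸ hrefl q, hrefl q⟩
      rcases hc hp hq hpq with h | h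
      · exact ⟨q, hq, h, hrefl q⟩
      · exact ⟨p, hp, hrefl p, h⟩
    set TU : Set S := ⋃ p ∈ c, (p : P).1.1 with hTUdef
    set hU : S → ℝ≥0∞ := fun v => ⨆ p ∈ c, if v ∈ (p : P).1.1 then (p : P).1.2 v else 0
      with hUdef
    have hmemU : ∀ p ∈ c, ∀ v ∈ (p : P).1.1, v ∈ TU := by
      intro p hp v hv
      exact Set.mem_biUnion hp hv
    have hcompat : ∀ p ∈ c, ∀ v ∈ (p : P).1.1, hU v = (p : P).1.2 v := by
      intro p hp v hv
      refine le_antisymm ?_ ?_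
      · refine iSup₂_le ?_
        intro q hq
        by_cases hvq : v ∈ (q : P).1.1
        · rw [if_pos hvq]
          by_cases hpq : p = q
          · subst hpq; exact le_rfl
          rcases hc hp hq hpq with h | h
          · exact le_of_eq (h.2 v hv).symm
          · exact le_of_eq (h.2 v hvq)
        · rw [if_neg hvq]; exact zero_le
      · have h6 : (p : P).1.2 v = if v ∈ (p : P).1.1 then (p : P).1.2 v else 0 :=
          (if_pos hv).symm
        rw [h6]
        exact le_iSup₂ (f := fun (q : P) (_ : q ∈ c) =>
          if v ∈ (q : P).1.1 then (q : P).1.2 v else 0) p hp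
    have hmemU' : ∀ v ∈ TU, ∃ p ∈ c, v ∈ (p : P).1.1 := by
      intro v hv
      rw [hTUdef] at hv
      simpa using hv
    have hGU : GoodExt α β TU hU := by
      constructor
      · intro v hv
        exact hmemU q0 hq0 v (q0.2.memD v hv)
      · intro v hv
        rw [hcompat q0 hq0 v (q0.2.memD v hv)]
        exact q0.2.eqD v hv
      · exact hmemU q0 hq0 0 q0.2.zero_mem
      · intro x y hx hy
        obtain ⟨p, hp, hxp⟩ := hmemU' x hx
        obtain ⟨q, hq, hyq⟩ := hmemU' y hy
        obtain ⟨s, hs, hps, hqs⟩ := htri p hp q hq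
        exact hmemU s hs _ (s.2.add_mem (hps.1 hxp) (hqs.1 hyq))
      · intro x y hx hy
        obtain ⟨p, hp, hxp⟩ := hmemU' x hx
        obtain ⟨q, hq, hyq⟩ := hmemU' y hy
        obtain ⟨s, hs, hps, hqs⟩ := htri p hp q hq
        have hxs := hps.1 hxp
        have hys := hqs.1 hyq
        rw [hcompat s hs x hxs, hcompat s hs y hys,
          hcompat s hs _ (s.2.add_mem hxs hys)]
        exact s.2.map_add hxs hys
      · rw [hcompat q0 hq0 0 q0.2.zero_mem]
        exact q0.2.map_zero
      · intro x y hx hy z hcons hguard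
        obtain ⟨w, hw, hzw, hwfin⟩ := hguard
        obtain ⟨p, hp, hxp⟩ := hmemU' x hx
        obtain ⟨q, hq, hyq⟩ := hmemU' y hy
        obtain ⟨rr, hr, hwr⟩ := hmemU' w hw
        obtain ⟨s1, hs1, hps1, hqs1⟩ := htri p hp q hq
        obtain ⟨s, hs, hs1s, hrs⟩ := htri s1 hs1 rr hr
        have hxs := hs1s.1 (hps1.1 hxp)
        have hys := hs1s.1 (hqs1.1 hyq)
        have hws := hrs.1 hwr
        rw [hcompat s hs x hxs, hcompat s hs y hys]
        refine s.2.mono hxs hys z hcons ⟨w, hws, hzw, ?_⟩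
        rw [← hcompat s hs w hws]
        exact hwfin
    refine ⟨⟨⟨TU, hU⟩, hGU⟩, ?_⟩
    intro p hp
    exact ⟨fun v hv => hmemU p hp v hv, fun v hv => (hcompat p hp v hv).symm⟩
  obtain ⟨m, hm⟩ := exists_maximal_of_chains_bounded hbdd (fun h1 h2 => htrans h1 h2)
  have huniv : m.1.1 = Set.univ := by
    by_contra hne
    obtain ⟨a, ha⟩ : ∃ a, a ∉ m.1.1 := by
      by_contra h
      push_neg at h
      exact hne (Set.eq_univ_of_forall h)
    obtain ⟨T', h', hG', hsub, haT', hagree⟩ := goodExt_extend hS m.2 a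
    have hle' : r m ⟨(T', h'), hG'⟩ := ⟨hsub, fun v hv => (hagree v hv).symm⟩
    have := hm _ hle'
    exact ha (this.1 haT')
  exact ⟨m.1.2, huniv ▸ m.2⟩

/-- The complementary functional, obtained from a total good extension by regularization
along compact containment. -/
lemma exists_complement (hS : CuO5 S) {α β : S → ℝ≥0∞} (hα : IsFunctional α)
    (hβ : IsFunctional β) (hle : ∀ s, α s ≤ β s) :
    ∃ γ : S → ℝ≥0∞, IsFunctional γ ∧ ∀ s : S, α s + γ s = β s := by
  classical
  obtain ⟨g, G⟩ := exists_total_goodExt hS hα hβ hle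
  have gadd : ∀ x y : S, g (x + y) = g x + g y :=
    fun x y => G.map_add (Set.mem_univ x) (Set.mem_univ y)
  have gmono : ∀ {x y : S}, x ≤ y → g x ≤ g y := by
    intro x y hxy
    refine G.mono (Set.mem_univ x) (Set.mem_univ y) 0 (by simpa using hxy)
      ⟨0, Set.mem_univ 0, le_rfl, ?_⟩
    rw [G.map_zero]
    exact ENNReal.zero_ne_top
  have geq : ∀ v : S, α v ≠ ⊤ → α v + g v = β v := fun v hv => G.eqD v hv
  -- the regularization
  set γ : S → ℝ≥0∞ := fun s => ⨆ x : {x : S // CC x s}, g x.1 with hγdef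
  haveI hne : ∀ s : S, Nonempty {x : S // CC x s} := fun s => ⟨⟨0, cc_zero hS s⟩⟩
  have hterm : ∀ s : S, ∀ x : S, CC x s → g x ≤ γ s := by
    intro s x hx
    rw [hγdef]
    exact le_iSup (fun x : {x : S // CC x s} => g x.1) ⟨x, hx⟩
  have hγmono : ∀ {s t : S}, s ≤ t → γ s ≤ γ t := by
    intro s t hst
    refine iSup_le ?_
    intro x
    exact hterm t x.1 (cc_mono_right x.2 hst)
  have hγzero : γ 0 = 0 := by
    refine le_antisymm (iSup_le ?_) zero_le
    intro x
    have hx0 : x.1 = 0 := le_antisymm (cc_le x.2) (hS.zeroLe _)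
    rw [hx0, G.map_zero]
  have hγadd : ∀ s t : S, γ (s + t) = γ s + γ t := by
    intro s t
    refine le_antisymm ?_ ?_
    · refine iSup_le ?_
      rintro ⟨x, hx⟩
      obtain ⟨u, hu, hulub⟩ := hS.O2 s
      obtain ⟨v, hv, hvlub⟩ := hS.O2 t
      have hwmono : Monotone (fun n => u n + v n) :=
        fun a b hab => add_le_add' hS (rapid_mono hu hab) (rapid_mono hv hab)
      have hwlub : IsLUB (Set.range fun n => u n + v n) (s + t) :=
        hS.O4 u v (rapid_mono hu) (rapid_mono hv) s t hulub hvlub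
      obtain ⟨n, hn⟩ := hx (fun n => u n + v n) hwmono (s + t) hwlub le_rfl
      calc g x ≤ g (u n + v n) := gmono hn
        _ = g (u n) + g (v n) := gadd _ _
        _ ≤ γ s + γ t := add_le_add (hterm s (u n) (rapid_cc hu hulub n))
            (hterm t (v n) (rapid_cc hv hvlub n))
    · rw [hγdef]
      rw [ENNReal.iSup_add]
      refine iSup_le ?_
      rintro ⟨x, hx⟩
      rw [ENNReal.add_iSup]
      refine iSup_le ?_
      rintro ⟨y, hy⟩
      rw [← gadd]
      exact hterm (s + t) (x + y) (hS.O3 hx hy)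
  have hγsup : ∀ u : ℕ → S, Monotone u → ∀ x : S, IsLUB (Set.range u) x →
      γ x = ⨆ n, γ (u n) := by
    intro u hu x hulub
    refine le_antisymm ?_ (iSup_le fun n => hγmono (lub_le_of_mem hulub n))
    refine iSup_le ?_
    rintro ⟨y, hy⟩
    obtain ⟨z, hz, hzlub⟩ := hS.O2 x
    obtain ⟨k, hk⟩ := hy z (rapid_mono hz) x hzlub le_rfl
    have hyz : CC y (z (k + 1)) := le_cc hk (hz k)
    obtain ⟨n, hn⟩ := hz (k + 1) u hu x hulub (lub_le_of_mem hzlub (k + 2))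
    have : CC y (u n) := cc_mono_right hyz hn
    exact le_iSup_of_le n (hterm (u n) y this)
  have hγeq : ∀ s : S, α s + γ s = β s := by
    intro s
    by_cases hs : α s = ⊤
    · have hβs : β s = ⊤ := top_le_iff.mp (hs ▸ hle s)
      rw [hs, hβs, top_add]
    · refine le_antisymm ?_ ?_
      · rw [hγdef, ENNReal.add_iSup]
        refine iSup_le ?_
        rintro ⟨x, hx⟩
        have hxle : x ≤ s := cc_le hx
        have hαx : α x ≠ ⊤ := ne_top_of_le_ne_top hs (hα.mono hxle)
        have hcross : β x + α s ≤ β s + α x := cross_le hS hα hβ hle hxle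
        have h7 : (α s + g x) + α x ≤ β s + α x := by
          calc (α s + g x) + α x = α s + (α x + g x) := by ring
            _ = α s + β x := by rw [geq x hαx]
            _ = β x + α s := add_comm _ _
            _ ≤ β s + α x := hcross
        exact (ENNReal.add_le_add_iff_right hαx).mp h7
      · obtain ⟨z, hz, hzlub⟩ := hS.O2 s
        have hβs : β s = ⨆ k, β (z k) := hβ.map_sup z (rapid_mono hz) s hzlub
        rw [hβs]
        refine iSup_le ?_
        intro k
        have hzks : z k ≤ s := lub_le_of_mem hzlub k
        have hαzk : α (z k) ≠ ⊤ := ne_top_of_le_ne_top hs (hα.mono hzks)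
        calc β (z k) = α (z k) + g (z k) := (geq (z k) hαzk).symm
          _ ≤ α s + γ s := add_le_add (hα.mono hzks)
              (hterm s (z k) (rapid_cc hz hzlub k))
  exact ⟨γ, ⟨hγzero, hγadd, fun {s t} h => hγmono h, hγsup⟩, hγeq⟩

end CuAux

/-- For functionals `α β` on an O1-O5 semigroup, `α ≤ β` pointwise iff
`α + γ = β` for some functional `γ`. -/
theorem pointwise_le_iff_add_functional {S : Type*} [AddCommMonoid S] [PartialOrder S]
    (hS : CuO5 S) (α β : S → ℝ≥0∞) (hα : IsFunctional α) (hβ : IsFunctional β) :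
    (∀ s : S, α s ≤ β s) ↔
      ∃ γ : S → ℝ≥0∞, IsFunctional γ ∧ ∀ s : S, α s + γ s = β s := by
  constructor
  · intro hle
    exact CuAux.exists_complement hS hα hβ hle
  · rintro ⟨γ, hγ, heq⟩ s
    rw [← heq s]
    exact self_le_add_right _ _
end

section
/- Let S be an ordered semigroup satisfying axioms O1–O5 and let s, t ∈ S. Then λ(s) ≤ λ(t) for every functional λ on S if and only if for every ε > 0 and every s' ∈ S with s' ≪ s there exist positive integers M, N with M/N > 1 − ε and M s' ≤ N t (where M s' denotes the M-fold sum of s' and N t the N-fold sum of t). -/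
open scoped ENNReal

section Aux
variable {S : Type*} [AddCommMonoid S] [PartialOrder S]

lemma cc_le {s t : S} (h : CC s t) : s ≤ t := by
  obtain ⟨n, hn⟩ := h (fun _ => t) monotone_const t
    (by simpa using isLUB_singleton) le_rfl
  exact hn

lemma cc_of_le_left {z s t : S} (hzs : z ≤ s) (h : CC s t) : CC z t :=
  fun u hu x hx htx => (h u hu x hx htx).imp fun n hn => hzs.trans hn

lemma cc_of_le_right {s t u : S} (h : CC s t) (htu : t ≤ u) : CC s u :=
  fun v hv x hx hux => h v hv x hx (htu.trans hux)

lemma cc_zero (hS : CuO5 S) (x : S) : CC 0 x :=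
  fun u _ _ _ _ => ⟨0, hS.zeroLe _⟩

lemma add_le_add' (hS : CuO5 S) {a b c d : S} (h1 : a ≤ b) (h2 : c ≤ d) :
    a + c ≤ b + d := by
  calc a + c ≤ b + c := hS.addRightMono h1 c
  _ = c + b := add_comm _ _
  _ ≤ d + b := hS.addRightMono h2 b
  _ = b + d := add_comm _ _

lemma le_add_self' (hS : CuO5 S) (a b : S) : a ≤ b + a := by
  simpa using hS.addRightMono (hS.zeroLe b) a

lemma le_add_self'' (hS : CuO5 S) (a b : S) : a ≤ a + b := by
  rw [add_comm]; exact le_add_self' hS a b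

lemma nsmul_le_nsmul' (hS : CuO5 S) {a b : S} (h : a ≤ b) (n : ℕ) : n • a ≤ n • b := by
  induction n with
  | zero => simp
  | succ k ih => rw [succ_nsmul, succ_nsmul]; exact add_le_add' hS ih h

lemma nsmul_le_nsmul_scalar (hS : CuO5 S) {m n : ℕ} (h : m ≤ n) (a : S) :
    m • a ≤ n • a := by
  obtain ⟨k, rfl⟩ := Nat.exists_eq_add_of_le h
  rw [add_nsmul]; exact le_add_self'' hS _ _

end Aux
section Aux2
variable {S : Type*} [AddCommMonoid S] [PartialOrder S]

lemma diagonal (hS : CuO5 S) (u : ℕ → S) (hu : Monotone u) (x : S)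
    (hx : IsLUB (Set.range u) x) :
    ∃ w : ℕ → S, Monotone w ∧ (∀ j, CC (w j) (u j)) ∧ IsLUB (Set.range w) x := by
  choose v hv1 hv2 using fun n => hS.O2 (u n)
  have vmono : ∀ n, Monotone (v n) := fun n =>
    monotone_nat_of_le_succ (fun k => cc_le (hv1 n k))
  have vle : ∀ n k, v n k ≤ u n := fun n k => (hv2 n).1 (Set.mem_range_self k)
  have vcc : ∀ n k, CC (v n k) (u n) := fun n k =>
    cc_of_le_right (hv1 n k) (vle n (k+1))
  have find : ∀ (z : S) (j j' : ℕ), CC z (u j) → j ≤ j' → ∃ m, z ≤ v j' m :=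
    fun z j j' hz hjj' => hz (v j') (vmono j') (u j') (hv2 j') (hu hjj')
  have exists_m : ∀ (j kj : ℕ), ∃ m, v j kj ≤ v (j+1) m ∧ ∀ i ≤ j, v i j ≤ v (j+1) m := by
    intro j kj
    obtain ⟨m₀, hm₀⟩ := find (v j kj) j (j+1) (vcc j kj) (Nat.le_succ j)
    have H : ∀ c : ℕ, ∃ m, ∀ i < c, i ≤ j → v i j ≤ v (j+1) m := by
      intro c
      induction c with
      | zero => exact ⟨0, fun i hi _ => absurd hi (Nat.not_lt_zero i)⟩
      | succ c ih =>
        obtain ⟨m₁, hm₁⟩ := ih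
        by_cases hc : c ≤ j
        · obtain ⟨m₂, hm₂⟩ := find (v c j) c (j+1) (vcc c j) (hc.trans (Nat.le_succ j))
          refine ⟨max m₁ m₂, fun i hi hij => ?_⟩
          rcases Nat.lt_succ_iff_lt_or_eq.mp hi with h | rfl
          · exact (hm₁ i h hij).trans (vmono (j+1) (le_max_left _ _))
          · exact hm₂.trans (vmono (j+1) (le_max_right _ _))
        · refine ⟨m₁, fun i hi hij => hm₁ i ?_ hij⟩
          omega
    obtain ⟨m₁, hm₁⟩ := H (j+1)
    refine ⟨max m₀ m₁, (hm₀.trans (vmono (j+1) (le_max_left _ _))), fun i hij => ?_⟩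
    exact (hm₁ i (Nat.lt_succ_of_le hij) hij).trans (vmono (j+1) (le_max_right _ _))
  choose F hF1 hF2 using exists_m
  set k : ℕ → ℕ := fun j => Nat.rec 0 (fun j kj => F j kj) j with hk
  have hksucc : ∀ j, k (j+1) = F j (k j) := fun j => rfl
  refine ⟨fun j => v j (k j), monotone_nat_of_le_succ (fun j => ?_), fun j => ?_, ?_, ?_⟩
  · rw [hksucc]; exact hF1 j (k j)
  · exact vcc j (k j)
  · rintro _ ⟨j, rfl⟩
    exact (vle j (k j)).trans (hx.1 (Set.mem_range_self j))
  · intro y hy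
    refine hx.2 ?_
    rintro _ ⟨n, rfl⟩
    refine (hv2 n).2 ?_
    rintro _ ⟨kk, rfl⟩
    have h1 : v n kk ≤ v n (max n kk) := vmono n (le_max_right _ _)
    have h2 : v n (max n kk) ≤ v (max n kk + 1) (k (max n kk + 1)) := by
      rw [hksucc]; exact hF2 (max n kk) (k (max n kk)) n (le_max_left _ _)
    exact (h1.trans h2).trans (hy (Set.mem_range_self (max n kk + 1)))

lemma smoothing (hS : CuO5 S) (μ : S → ℝ≥0∞) (h0 : μ 0 = 0)
    (hadd : ∀ x y, μ (x+y) = μ x + μ y) (hmono : ∀ {x y : S}, x ≤ y → μ x ≤ μ y) :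
    IsFunctional (fun x => ⨆ z : {z : S // CC z x}, μ z.1) := by
  have hne : ∀ x : S, Nonempty {z : S // CC z x} := fun x => ⟨⟨0, cc_zero hS x⟩⟩
  constructor
  · simp only [ENNReal.iSup_eq_zero]
    rintro ⟨z, hz⟩
    have : z = 0 := le_antisymm (cc_le hz) (hS.zeroLe z)
    simp [this, h0]
  · intro x y
    refine le_antisymm (iSup_le ?_) ?_
    · rintro ⟨z, hz⟩
      obtain ⟨a, ha1, ha2⟩ := hS.O2 x
      obtain ⟨b, hb1, hb2⟩ := hS.O2 y
      have hamono : Monotone a := monotone_nat_of_le_succ (fun n => cc_le (ha1 n))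
      have hbmono : Monotone b := monotone_nat_of_le_succ (fun n => cc_le (hb1 n))
      have hlub := hS.O4 a b hamono hbmono x y ha2 hb2
      obtain ⟨n, hn⟩ := hz (fun n => a n + b n)
        (fun i j hij => add_le_add' hS (hamono hij) (hbmono hij)) (x+y) hlub le_rfl
      have hax : CC (a n) x := cc_of_le_right (ha1 n) (ha2.1 (Set.mem_range_self (n+1)))
      have hby : CC (b n) y := cc_of_le_right (hb1 n) (hb2.1 (Set.mem_range_self (n+1)))
      calc μ z ≤ μ (a n + b n) := hmono hn
      _ = μ (a n) + μ (b n) := hadd _ _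
      _ ≤ _ := add_le_add (le_iSup (fun z : {z : S // CC z x} => μ z.1) ⟨a n, hax⟩)
          (le_iSup (fun z : {z : S // CC z y} => μ z.1) ⟨b n, hby⟩)
    · have := hne x; have := hne y
      refine ENNReal.iSup_add_iSup_le ?_
      rintro ⟨z₁, hz₁⟩ ⟨z₂, hz₂⟩
      rw [← hadd]
      exact le_iSup (fun z : {z : S // CC z (x+y)} => μ z.1) ⟨z₁ + z₂, hS.O3 hz₁ hz₂⟩
  · intro x y hxy
    refine iSup_le ?_
    rintro ⟨z, hz⟩
    exact le_iSup (fun z : {z : S // CC z y} => μ z.1) ⟨z, cc_of_le_right hz hxy⟩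
  · intro u hu x hx
    refine le_antisymm (iSup_le ?_) (iSup_le fun n => iSup_le ?_)
    · rintro ⟨z, hz⟩
      obtain ⟨w, hwmono, hwcc, hwlub⟩ := diagonal hS u hu x hx
      obtain ⟨j, hj⟩ := hz w hwmono x hwlub le_rfl
      calc μ z ≤ μ (w j) := hmono hj
      _ ≤ ⨆ z : {z : S // CC z (u j)}, μ z.1 :=
          le_iSup (fun z : {z : S // CC z (u j)} => μ z.1) ⟨w j, hwcc j⟩
      _ ≤ _ := le_iSup (fun n => ⨆ z : {z : S // CC z (u n)}, μ z.1) j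
    · rintro ⟨z, hz⟩
      exact le_iSup (fun z : {z : S // CC z x} => μ z.1)
        ⟨z, cc_of_le_right hz (hx.1 (Set.mem_range_self n))⟩

end Aux2
section Aux3
variable {S : Type*} [AddCommMonoid S] [PartialOrder S]

lemma func_nsmul {l : S → ℝ≥0∞} (hl : IsFunctional l) (M : ℕ) (x : S) :
    l (M • x) = (M : ℝ≥0∞) * l x := by
  induction M with
  | zero => simp [hl.map_zero]
  | succ k ih => rw [succ_nsmul, hl.map_add, ih]; push_cast; ring

lemma easy_dir (hS : CuO5 S) (s t : S)
    (h : ∀ ε : ℝ, 0 < ε → ∀ s' : S, CC s' s →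
      ∃ M N : ℕ, 0 < M ∧ 0 < N ∧ (1 - ε : ℝ) < (M : ℝ) / (N : ℝ) ∧ M • s' ≤ N • t)
    (l : S → ℝ≥0∞) (hl : IsFunctional l) : l s ≤ l t := by
  have key : ∀ s' : S, CC s' s → l s' ≤ l t := by
    intro s' hs'
    refine ENNReal.le_of_forall_lt_one_mul_le ?_
    intro a ha
    have hane : a ≠ ∞ := ne_top_of_lt ha
    have hat : a.toReal < 1 := by
      have := (ENNReal.toReal_lt_toReal hane (by simp : (1:ℝ≥0∞) ≠ ∞)).mpr ha
      simpa using this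
    obtain ⟨M, N, hM, hN, hMN, hle⟩ := h (1 - a.toReal) (by linarith) s' hs'
    have hMN' : a.toReal < (M:ℝ)/N := by linarith
    have haM : a ≤ (M : ℝ≥0∞) / (N : ℝ≥0∞) := by
      rw [← ENNReal.ofReal_toReal hane, ← ENNReal.ofReal_natCast M, ← ENNReal.ofReal_natCast N,
        ← ENNReal.ofReal_div_of_pos (by exact_mod_cast hN)]
      exact ENNReal.ofReal_le_ofReal hMN'.le
    have hNne : (N : ℝ≥0∞) ≠ 0 := by exact_mod_cast hN.ne'
    have hNnt : (N : ℝ≥0∞) ≠ ∞ := ENNReal.natCast_ne_top N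
    calc a * l s' ≤ ((M : ℝ≥0∞) / N) * l s' := mul_le_mul_left haM _
    _ = ((M : ℝ≥0∞) * l s') / N := by
        rw [div_eq_mul_inv, div_eq_mul_inv, mul_right_comm]
    _ = l (M • s') / N := by rw [func_nsmul hl]
    _ ≤ l (N • t) / N := ENNReal.div_le_div_right (hl.mono hle) _
    _ = ((N : ℝ≥0∞) * l t) / N := by rw [func_nsmul hl]
    _ = l t := by
        rw [div_eq_mul_inv, mul_right_comm, ENNReal.mul_inv_cancel hNne hNnt, one_mul]
  obtain ⟨u, hu1, hu2⟩ := hS.O2 s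
  rw [hl.map_sup u (monotone_nat_of_le_succ fun n => cc_le (hu1 n)) s hu2]
  exact iSup_le fun n => key (u n)
    (cc_of_le_right (hu1 n) (hu2.1 (Set.mem_range_self (n+1))))

end Aux3
section Aux4
variable {S : Type*} [AddCommMonoid S] [PartialOrder S]

lemma caseA (hS : CuO5 S) (s t s' : S) (hs' : CC s' s)
    (hA : ∀ N : ℕ, ¬ s' ≤ N • t) :
    ∃ l : S → ℝ≥0∞, IsFunctional l ∧ ¬ l s ≤ l t := by
  classical
  set I : Set S := {x | ∃ N : ℕ, x ≤ N • t} with hI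
  set μ : S → ℝ≥0∞ := fun x => if x ∈ I then 0 else ∞ with hμ
  have hadd : ∀ x y, μ (x+y) = μ x + μ y := by
    intro x y
    by_cases hx : x ∈ I
    · by_cases hy : y ∈ I
      · have hxy : x + y ∈ I := by
          obtain ⟨Nx, hNx⟩ := hx; obtain ⟨Ny, hNy⟩ := hy
          exact ⟨Nx + Ny, by rw [add_nsmul]; exact add_le_add' hS hNx hNy⟩
        simp [hμ, hx, hy, hxy]
      · have hxy : x + y ∉ I := fun ⟨N, hN⟩ => hy ⟨N, (le_add_self' hS y x).trans hN⟩
        simp [hμ, hx, hy, hxy]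
    · have hxy : x + y ∉ I := fun ⟨N, hN⟩ => hx ⟨N, (le_add_self'' hS x y).trans hN⟩
      simp [hμ, hx, hxy]
  have hmono : ∀ {x y : S}, x ≤ y → μ x ≤ μ y := by
    intro x y hxy
    by_cases hy : y ∈ I
    · have hx : x ∈ I := hy.imp fun N hN => hxy.trans hN
      simp [hμ, hx, hy]
    · simp [hμ, hy]
  have h0 : μ 0 = 0 := by
    have h00 : (0:S) ∈ I := ⟨0, by simp⟩
    simp [hμ, h00]
  refine ⟨_, smoothing hS μ h0 hadd hmono, ?_⟩
  intro hle
  have h1 : (∞:ℝ≥0∞) ≤ ⨆ z : {z : S // CC z s}, μ z.1 := by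
    have hs'I : s' ∉ I := fun ⟨N, hN⟩ => hA N hN
    have := le_iSup (fun z : {z : S // CC z s} => μ z.1) ⟨s', hs'⟩
    simpa [hμ, hs'I] using this
  have h2 : (⨆ z : {z : S // CC z t}, μ z.1) ≤ 0 := by
    refine iSup_le ?_; rintro ⟨z, hz⟩
    have hz' : z ∈ I := ⟨1, by simpa using cc_le hz⟩
    simp [hμ, hz']
  exact absurd (h1.trans (hle.trans h2)) (by simp)
end Aux4
section CaseBAux

lemma real_slope2 {A B C D : ℝ} (h : ∀ j : ℕ, 0 < j → A + (j:ℝ)*B ≤ C + (j:ℝ)*D) :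
    B ≤ D := by
  by_contra hBD
  push_neg at hBD
  obtain ⟨j, hj⟩ := exists_nat_gt (max 0 ((C - A)/(B - D)))
  have hj0 : 0 < j := by
    have := (le_max_left 0 ((C-A)/(B-D))).trans_lt hj
    exact_mod_cast this
  have h1 := h j hj0
  have h2 : (C - A)/(B - D) < j := (le_max_right _ _).trans_lt hj
  have h3 : C - A < j * (B - D) := by
    rw [div_lt_iff₀ (by linarith)] at h2; linarith
  nlinarith

lemma nat_slope {A B R : ℕ} (h : ∀ j : ℕ, 0 < j → j*A ≤ j*B + R) : A ≤ B := by
  by_contra hab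
  push_neg at hab
  have h1 := h (R+1) (Nat.succ_pos R)
  have h2 : (R+1)*(B+1) ≤ (R+1)*A := Nat.mul_le_mul_left _ hab
  nlinarith

variable {S : Type*} [AddCommMonoid S] [PartialOrder S]

/-- translated comparison relation used for the base state in case B -/
def ConB (t s' : S) (a b a' b' : ℕ) : Prop :=
  ∃ r : S, (∃ R : ℕ, r ≤ R • t) ∧ a•s' + b•t + r ≤ a'•s' + b'•t + r

lemma ka (hS : CuO5 S) {X Y r : S} (h : X + r ≤ Y + r) :
    ∀ k : ℕ, k•X + r ≤ k•Y + r := by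
  intro k
  induction k with
  | zero => simp
  | succ k ih =>
    calc (k+1)•X + r = X + (k•X + r) := by rw [succ_nsmul']; rw [add_assoc]
    _ ≤ X + (k•Y + r) := by
        rw [add_comm X _, add_comm X _]; exact hS.addRightMono ih X
    _ = k•Y + (X + r) := by abel
    _ ≤ k•Y + (Y + r) := by
        rw [add_comm _ (X+r), add_comm _ (Y+r)]; exact hS.addRightMono h _
    _ = (k+1)•Y + r := by rw [succ_nsmul']; abel

lemma ka' (hS : CuO5 S) {X Y r : S} (h : X + r ≤ Y + r) {t : S} {R : ℕ} (hr : r ≤ R • t) :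
    ∀ k : ℕ, k•X ≤ k•Y + R•t := by
  intro k
  calc k•X ≤ k•X + r := le_add_self'' hS _ _
  _ ≤ k•Y + r := ka hS h k
  _ ≤ k•Y + R•t := by
      rw [add_comm _ r, add_comm _ (R•t)]; exact hS.addRightMono hr _

end CaseBAux
section CaseBAux2
variable {S : Type*} [AddCommMonoid S] [PartialOrder S]
variable {t s' : S} {ε : ℝ} {N₀ : ℕ}

lemma two_le_cast {M : ℕ} (hM : 0 < M) : (2:ℝ) ≤ ((2*M : ℕ):ℝ) := by
  have h : 2 ≤ 2*M := by omega
  exact_mod_cast h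

lemma ne_lemma (hS : CuO5 S) (hε : 0 < ε)
    (hyp : ∀ M N : ℕ, 0 < M → 0 < N → M • s' ≤ N • t → (M:ℝ)/(N:ℝ) ≤ 1 - ε)
    {M N R : ℕ} (hM : 0 < M)
    (h : ∀ j : ℕ, 0 < j → (j*M)•s' ≤ (j*N + R)•t) : (M:ℝ) ≤ (1-ε)*N := by
  by_cases hNR : N = 0 ∧ R = 0
  · exfalso
    obtain ⟨rfl, rfl⟩ := hNR
    have hb : (2*M)•s' ≤ 1•t := by
      have h2 := h 2 two_pos
      simpa using h2.trans (nsmul_le_nsmul_scalar hS (Nat.zero_le 1) t)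
    have h2 := hyp (2*M) 1 (by omega) Nat.one_pos hb
    simp only [Nat.cast_one, div_one] at h2
    have := two_le_cast hM
    linarith
  · have hpos : ∀ j : ℕ, 0 < j → 0 < j*N + R := by
      intro j hj
      rcases Nat.eq_zero_or_pos N with rfl | hN
      · omega
      · positivity
    have key : ∀ j : ℕ, 0 < j → ((j*M:ℕ):ℝ) ≤ (1-ε)*((j*N+R:ℕ):ℝ) := by
      intro j hj
      have h1 := hyp (j*M) (j*N+R) (Nat.mul_pos hj hM) (hpos j hj) (h j hj)
      have h2 : (0:ℝ) < ((j*N+R:ℕ):ℝ) := by exact_mod_cast hpos j hj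
      rw [div_le_iff₀ h2] at h1
      exact h1
    refine real_slope2 (A := 0) (C := (1-ε)*R) (fun j hj => ?_)
    have := key j hj
    push_cast at this
    linarith

lemma noncollapse (hS : CuO5 S) (hε : 0 < ε)
    (hyp : ∀ M N : ℕ, 0 < M → 0 < N → M • s' ≤ N • t → (M:ℝ)/(N:ℝ) ≤ 1 - ε)
    (hN₀ : s' ≤ N₀ • t) {N N' : ℕ} (h : N•t ≤ N'•t) : N ≤ N' := by
  by_contra hNN
  push_neg at hNN
  have hN1 : 1 ≤ N := by omega
  have hpow : ∀ j : ℕ, (N^j)•t ≤ (N'^j)•t := by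
    intro j
    induction j with
    | zero => simp
    | succ j ih =>
      calc (N^(j+1))•t = N•((N^j)•t) := by rw [pow_succ', mul_nsmul']
      _ ≤ N•((N'^j)•t) := nsmul_le_nsmul' hS ih N
      _ = (N'^j)•(N•t) := by rw [← mul_nsmul', mul_nsmul]
      _ ≤ (N'^j)•(N'•t) := nsmul_le_nsmul' hS h _
      _ = (N'^(j+1))•t := by rw [← mul_nsmul, ← pow_succ']
  have hcontr1 : ∀ M : ℕ, 0 < M → M•s' ≤ 0 → False := by
    intro M hM hM0
    have hb : (2*M)•s' ≤ 1•t := by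
      have h1 : (2*M)•s' ≤ 0 := by
        rw [mul_nsmul']
        calc (2:ℕ)•(M•s') ≤ (2:ℕ)•(0:S) := nsmul_le_nsmul' hS hM0 2
        _ = 0 := by simp
      exact h1.trans (hS.zeroLe _)
    have h2 := hyp (2*M) 1 (by omega) Nat.one_pos hb
    simp only [Nat.cast_one, div_one] at h2
    have := two_le_cast hM
    linarith
  rcases Nat.eq_zero_or_pos N₀ with rfl | hN₀pos
  · exact hcontr1 1 Nat.one_pos (by simpa using hN₀)
  rcases Nat.eq_zero_or_pos N' with rfl | hN'pos
  · have ht0 : t ≤ 0 := by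
      calc t = 1•t := (one_nsmul t).symm
      _ ≤ N•t := nsmul_le_nsmul_scalar hS hN1 t
      _ ≤ 0 := by rw [zero_nsmul] at h; exact h
    have hs0 : s' ≤ 0 := hN₀.trans (by
      calc N₀•t ≤ N₀•(0:S) := nsmul_le_nsmul' hS ht0 _
      _ = 0 := by simp)
    exact hcontr1 1 Nat.one_pos (by simpa using hs0)
  have hkey : ∀ j : ℕ, (N^j)•s' ≤ (N₀*N'^j)•t := by
    intro j
    calc (N^j)•s' ≤ (N^j)•(N₀•t) := nsmul_le_nsmul' hS hN₀ _
    _ = N₀•((N^j)•t) := by rw [← mul_nsmul, mul_nsmul']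
    _ ≤ N₀•((N'^j)•t) := nsmul_le_nsmul' hS (hpow j) _
    _ = (N₀*N'^j)•t := by rw [← mul_nsmul']
  have hnum : ∀ j : ℕ, ((N^j : ℕ):ℝ) ≤ (1-ε)*((N₀*N'^j : ℕ):ℝ) := by
    intro j
    have h1 := hyp (N^j) (N₀*N'^j) (Nat.pow_pos (by omega))
      (Nat.mul_pos hN₀pos (Nat.pow_pos hN'pos)) (hkey j)
    have h2 : (0:ℝ) < ((N₀*N'^j:ℕ):ℝ) := by
      exact_mod_cast Nat.mul_pos hN₀pos (Nat.pow_pos hN'pos)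
    rw [div_le_iff₀ h2] at h1
    exact h1
  set a : ℝ := 1/(N':ℝ) with ha
  have haN : (0:ℝ) < N' := by exact_mod_cast hN'pos
  have hapos : 0 < a := by positivity
  obtain ⟨j, hj⟩ := exists_nat_gt ((1-ε)*N₀/a)
  have hbern : 1 + (j:ℝ)*a ≤ (1+a)^j := one_add_mul_le_pow (by linarith) j
  have hNj : ((1+a)*(N':ℝ))^j ≤ ((N^j:ℕ):ℝ) := by
    have hne : (N':ℝ) ≠ 0 := ne_of_gt haN
    have h1 : (1+a)*(N':ℝ) = N' + 1 := by rw [ha]; field_simp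
    have h2 : ((N':ℝ)+1) ≤ N := by exact_mod_cast hNN
    rw [h1]
    push_cast
    exact pow_le_pow_left₀ (by positivity) h2 j
  have hN'j : (0:ℝ) < (N':ℝ)^j := by positivity
  have hfin : (1 + (j:ℝ)*a) * (N':ℝ)^j ≤ (1-ε)*N₀*(N':ℝ)^j := by
    calc (1 + (j:ℝ)*a) * (N':ℝ)^j ≤ (1+a)^j * (N':ℝ)^j :=
          mul_le_mul_of_nonneg_right hbern (le_of_lt hN'j)
    _ = ((1+a)*(N':ℝ))^j := by rw [mul_pow]
    _ ≤ ((N^j:ℕ):ℝ) := hNj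
    _ ≤ (1-ε)*((N₀*N'^j : ℕ):ℝ) := hnum j
    _ = (1-ε)*N₀*(N':ℝ)^j := by push_cast; ring
  have h5 : 1 + (j:ℝ)*a ≤ (1-ε)*N₀ := le_of_mul_le_mul_right hfin hN'j
  rw [div_lt_iff₀ hapos] at hj
  nlinarith
end CaseBAux2
section CaseBAux3
variable {S : Type*} [AddCommMonoid S] [PartialOrder S]
variable {t s' : S} {ε : ℝ} {N₀ : ℕ}

lemma conB_add (hS : CuO5 S) {a₁ b₁ a₁' b₁' a₂ b₂ a₂' b₂' : ℕ}
    (h₁ : ConB t s' a₁ b₁ a₁' b₁') (h₂ : ConB t s' a₂ b₂ a₂' b₂') :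
    ConB t s' (a₁+a₂) (b₁+b₂) (a₁'+a₂') (b₁'+b₂') := by
  obtain ⟨r₁, ⟨R₁, hR₁⟩, hc₁⟩ := h₁
  obtain ⟨r₂, ⟨R₂, hR₂⟩, hc₂⟩ := h₂
  refine ⟨r₁ + r₂, ⟨R₁ + R₂, by rw [add_nsmul]; exact add_le_add' hS hR₁ hR₂⟩, ?_⟩
  have := add_le_add' hS hc₁ hc₂
  calc (a₁+a₂)•s' + (b₁+b₂)•t + (r₁+r₂)
      = (a₁•s' + b₁•t + r₁) + (a₂•s' + b₂•t + r₂) := by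
        rw [add_nsmul, add_nsmul]; abel
  _ ≤ (a₁'•s' + b₁'•t + r₁) + (a₂'•s' + b₂'•t + r₂) := this
  _ = (a₁'+a₂')•s' + (b₁'+b₂')•t + (r₁+r₂) := by
        rw [add_nsmul, add_nsmul]; abel

lemma conB_smul (hS : CuO5 S) {a b a' b' : ℕ} (m : ℕ)
    (h : ConB t s' a b a' b') : ConB t s' (m*a) (m*b) (m*a') (m*b') := by
  obtain ⟨r, ⟨R, hR⟩, hc⟩ := h
  refine ⟨m•r, ⟨m*R, by rw [mul_nsmul']; exact nsmul_le_nsmul' hS hR m⟩, ?_⟩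
  have := nsmul_le_nsmul' hS hc m
  calc (m*a)•s' + (m*b)•t + m•r = m•(a•s' + b•t + r) := by
        rw [mul_nsmul', mul_nsmul', nsmul_add, nsmul_add]
  _ ≤ m•(a'•s' + b'•t + r) := this
  _ = (m*a')•s' + (m*b')•t + m•r := by
        rw [mul_nsmul', mul_nsmul', nsmul_add, nsmul_add]

lemma fact_i (hS : CuO5 S) (hε : 0 < ε)
    (hyp : ∀ M N : ℕ, 0 < M → 0 < N → M • s' ≤ N • t → (M:ℝ)/(N:ℝ) ≤ 1 - ε)
    (hN₀ : s' ≤ N₀ • t) {a b b' : ℕ} (h : ConB t s' a b a b') : b ≤ b' := by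
  by_contra hbb
  push_neg at hbb
  obtain ⟨r, ⟨R, hR⟩, hc⟩ := h
  set δ : ℕ := b - b' with hδ
  have hδ1 : 1 ≤ δ := by omega
  have hbd : b = b' + δ := by omega
  have chain : ∀ k : ℕ, a•s' + (b' + k*δ)•t + r ≤ a•s' + b'•t + r := by
    intro k
    induction k with
    | zero => simp
    | succ k ih =>
      have step : a•s' + (b' + (k+1)*δ)•t + r = (a•s' + b•t + r) + (k*δ)•t := by
        have hb2 : b' + (k+1)*δ = b + k*δ := by rw [hbd]; ring
        rw [hb2, add_nsmul]; abel
      rw [step]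
      calc (a•s' + b•t + r) + (k*δ)•t ≤ (a•s' + b'•t + r) + (k*δ)•t :=
            hS.addRightMono hc _
      _ = a•s' + (b' + k*δ)•t + r := by rw [add_nsmul]; abel
      _ ≤ a•s' + b'•t + r := ih
  have hnum : ∀ k : ℕ, (b' + k*δ) ≤ a*N₀ + b' := by
    intro k
    have hka := ka' hS (chain k) hR
    have htt : ∀ j : ℕ, (j*(b'+k*δ))•t ≤ (j*(a*N₀+b') + R)•t := by
      intro j
      calc (j*(b'+k*δ))•t ≤ j•(a•s' + (b'+k*δ)•t) := by
            rw [mul_nsmul', nsmul_add]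
            exact le_add_self' hS _ _
      _ ≤ j•(a•s' + b'•t) + R•t := hka j
      _ ≤ (j*(a*N₀+b') + R)•t := by
            rw [add_nsmul]
            refine hS.addRightMono ?_ _
            calc j•(a•s' + b'•t) ≤ j•(a•(N₀•t) + b'•t) := by
                  refine nsmul_le_nsmul' hS ?_ j
                  exact hS.addRightMono (nsmul_le_nsmul' hS hN₀ a) _
            _ = (j*(a*N₀+b'))•t := by
                  rw [← mul_nsmul' t a N₀, ← add_nsmul, ← mul_nsmul']
    exact nat_slope (A := b'+k*δ) (B := a*N₀+b') (R := R) (fun j _ => noncollapse hS hε hyp hN₀ (htt j))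
  have h1 := hnum (a*N₀+1)
  have h2 : a*N₀+1 ≤ (a*N₀+1)*δ := Nat.le_mul_of_pos_right _ hδ1
  omega
end CaseBAux3
section CaseBAux4
variable {S : Type*} [AddCommMonoid S] [PartialOrder S]
variable {t s' : S} {ε : ℝ} {N₀ : ℕ}

lemma bound_t (hS : CuO5 S) (hN₀ : s' ≤ N₀ • t) (A B j : ℕ) :
    j•(A•s' + B•t) ≤ (j*(A*N₀+B))•t := by
  calc j•(A•s' + B•t) ≤ j•(A•(N₀•t) + B•t) := by
        refine nsmul_le_nsmul' hS ?_ j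
        exact hS.addRightMono (nsmul_le_nsmul' hS hN₀ A) _
  _ = (j*(A*N₀+B))•t := by
        rw [← mul_nsmul' t A N₀, ← add_nsmul, ← mul_nsmul']

lemma lower_s (hS : CuO5 S) (A B j : ℕ) {x y : S} :
    (j*A)•x ≤ j•(A•x + B•y) := by
  rw [nsmul_add, mul_nsmul']
  exact le_add_self'' hS _ _

lemma fact_ii (hS : CuO5 S) (hε : 0 < ε)
    (hyp : ∀ M N : ℕ, 0 < M → 0 < N → M • s' ≤ N • t → (M:ℝ)/(N:ℝ) ≤ 1 - ε)
    (hN₀ : s' ≤ N₀ • t) {a b a' b' : ℕ} (h : ConB t s' a b a' b') (haa : a' ≤ a) :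
    b ≤ b' := by
  obtain ⟨r, ⟨R, hR⟩, hc⟩ := h
  refine fact_i hS hε hyp hN₀ (a := a) ⟨r, ⟨R, hR⟩, hc.trans ?_⟩
  exact hS.addRightMono (hS.addRightMono (nsmul_le_nsmul_scalar hS haa s') _) r

lemma fact_iii (hS : CuO5 S) (hε : 0 < ε)
    (hyp : ∀ M N : ℕ, 0 < M → 0 < N → M • s' ≤ N • t → (M:ℝ)/(N:ℝ) ≤ 1 - ε)
    (hN₀ : s' ≤ N₀ • t) {a b a' b' : ℕ} (h : ConB t s' a b a' b') (haa : a' < a) :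
    ((a:ℝ) - a') ≤ (1-ε)*((b':ℝ) - b) := by
  have hbb : b ≤ b' := fact_ii hS hε hyp hN₀ h haa.le
  obtain ⟨r, ⟨R, hR⟩, hc⟩ := h
  set d : ℕ := a - a' with hd
  set e : ℕ := b' - b with he
  have had : a = a' + d := by omega
  have hbe : b' = b + e := by omega
  have hd1 : 1 ≤ d := by omega
  have hc' : (a'+d)•s' + b•t + r ≤ a'•s' + (b+e)•t + r := by
    rw [← had, ← hbe]; exact hc
  have chain : ∀ k : ℕ,
      (a'+(k+1)*d)•s' + b•t + (k+1)•r ≤ a'•s' + (b+(k+1)*e)•t + (k+1)•r := by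
    intro k
    induction k with
    | zero => simpa using hc'
    | succ k ih =>
      have e1 : a'+(k+2)*d = (a'+d) + (k+1)*d := by ring
      have e2 : b+(k+2)*e = (b+(k+1)*e) + e := by ring
      calc (a'+(k+2)*d)•s' + b•t + (k+2)•r
          = ((a'+d)•s' + b•t + r) + (((k+1)*d)•s' + (k+1)•r) := by
            simp only [e1, add_nsmul, succ_nsmul']; abel
      _ ≤ (a'•s' + (b+e)•t + r) + (((k+1)*d)•s' + (k+1)•r) := hS.addRightMono hc' _
      _ = ((a'+(k+1)*d)•s' + b•t + (k+1)•r) + (e•t + r) := by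
            simp only [add_nsmul]; abel
      _ ≤ (a'•s' + (b+(k+1)*e)•t + (k+1)•r) + (e•t + r) := hS.addRightMono ih _
      _ = a'•s' + (b+(k+2)*e)•t + (k+2)•r := by
            simp only [e2, add_nsmul, succ_nsmul']; abel
  have hnum : ∀ k : ℕ, ((a'+(k+1)*d : ℕ):ℝ) ≤ (1-ε)*((a'*N₀+b+(k+1)*e : ℕ):ℝ) := by
    intro k
    have htrans : (k+1)•r ≤ ((k+1)*R)•t := by
      rw [mul_nsmul']; exact nsmul_le_nsmul' hS hR (k+1)
    have hka := ka' hS (chain k) htrans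
    have hform : ∀ j : ℕ, 0 < j →
        (j*(a'+(k+1)*d))•s' ≤ (j*(a'*N₀+(b+(k+1)*e)) + (k+1)*R)•t := by
      intro j _
      calc (j*(a'+(k+1)*d))•s' ≤ j•((a'+(k+1)*d)•s' + b•t) := lower_s hS _ _ _
      _ ≤ j•(a'•s' + (b+(k+1)*e)•t) + ((k+1)*R)•t := hka j
      _ ≤ (j*(a'*N₀+(b+(k+1)*e)))•t + ((k+1)*R)•t :=
            hS.addRightMono (bound_t hS hN₀ _ _ _) _
      _ = (j*(a'*N₀+(b+(k+1)*e)) + (k+1)*R)•t := by rw [← add_nsmul]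
    have := ne_lemma hS hε hyp (M := a'+(k+1)*d) (N := a'*N₀+(b+(k+1)*e))
      (R := (k+1)*R) (by positivity) hform
    calc ((a'+(k+1)*d : ℕ):ℝ) ≤ (1-ε)*((a'*N₀+(b+(k+1)*e) : ℕ):ℝ) := by
          push_cast at this ⊢; linarith
    _ = (1-ε)*((a'*N₀+b+(k+1)*e : ℕ):ℝ) := by push_cast; ring
  have hde : (d:ℝ) ≤ (1-ε)*e := by
    refine real_slope2 (A := (a':ℝ)) (C := (1-ε)*((a'*N₀+b:ℕ):ℝ)) (fun j hj => ?_)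
    obtain ⟨k, rfl⟩ := Nat.exists_eq_add_of_lt hj
    have := hnum k
    push_cast at this ⊢
    linarith
  have h1 : ((a:ℝ) - a') = (d:ℝ) := by
    rw [hd]; push_cast [Nat.cast_sub haa.le]; ring
  have h2 : ((b':ℝ) - b) = (e:ℝ) := by
    rw [he]; push_cast [Nat.cast_sub hbb]; ring
  rw [h1, h2]; exact hde
end CaseBAux4
section CaseBAux5
variable {S : Type*} [AddCommMonoid S] [PartialOrder S]

/-- candidate value of the base state at `s'` -/
noncomputable def pConB (t s' : S) : ℝ≥0∞ :=
  sInf {u | ∃ a b a' b' : ℕ, ConB t s' a b a' b' ∧ a' < a ∧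
    u = ((b' - b : ℕ):ℝ≥0∞) / ((a - a' : ℕ):ℝ≥0∞)}

variable {t s' : S} {ε : ℝ} {N₀ : ℕ}

lemma p_gt_one (hS : CuO5 S) (hε : 0 < ε) (h1ε : 0 < 1 - ε)
    (hyp : ∀ M N : ℕ, 0 < M → 0 < N → M • s' ≤ N • t → (M:ℝ)/(N:ℝ) ≤ 1 - ε)
    (hN₀ : s' ≤ N₀ • t) : 1 < pConB t s' := by
  have hγ : (1:ℝ≥0∞) < ENNReal.ofReal (1/(1-ε)) := by
    rw [← ENNReal.ofReal_one, ENNReal.ofReal_lt_ofReal_iff (by positivity)]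
    rw [lt_div_iff₀ h1ε]; linarith
  refine lt_of_lt_of_le hγ (le_sInf ?_)
  rintro u ⟨a, b, a', b', hcon, haa, rfl⟩
  have hbb : b ≤ b' := fact_ii hS hε hyp hN₀ hcon haa.le
  have hreal := fact_iii hS hε hyp hN₀ hcon haa
  have hd : ((a - a' : ℕ):ℝ) = (a:ℝ) - a' := Nat.cast_sub haa.le
  have he : ((b' - b : ℕ):ℝ) = (b':ℝ) - b := Nat.cast_sub hbb
  have hd1 : (1:ℝ) ≤ ((a - a':ℕ):ℝ) := by
    have : 1 ≤ a - a' := by omega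
    exact_mod_cast this
  have hkey : ((a-a':ℕ):ℝ) ≤ (1-ε)*((b'-b:ℕ):ℝ) := by rw [hd, he]; exact hreal
  have hdne : ((a - a' : ℕ):ℝ≥0∞) ≠ 0 := by
    simp only [ne_eq, Nat.cast_eq_zero]; omega
  rw [ENNReal.le_div_iff_mul_le (Or.inl hdne) (Or.inl (ENNReal.natCast_ne_top _))]
  rw [← ENNReal.ofReal_natCast (b'-b), ← ENNReal.ofReal_natCast (a-a'),
    ← ENNReal.ofReal_mul (by positivity)]
  refine ENNReal.ofReal_le_ofReal ?_
  rw [div_mul_eq_mul_div, div_le_iff₀ h1ε, one_mul]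
  linarith
end CaseBAux5
section CaseBAux6
variable {S : Type*} [AddCommMonoid S] [PartialOrder S]
variable {t s' : S} {ε : ℝ} {N₀ : ℕ}

lemma p_main (hS : CuO5 S) (hε : 0 < ε)
    (hyp : ∀ M N : ℕ, 0 < M → 0 < N → M • s' ≤ N • t → (M:ℝ)/(N:ℝ) ≤ 1 - ε)
    (hN₀ : s' ≤ N₀ • t) {a b a' b' : ℕ} (h : ConB t s' a b a' b') :
    (a:ℝ≥0∞) * pConB t s' + b ≤ (a':ℝ≥0∞) * pConB t s' + b' := by
  set p : ℝ≥0∞ := pConB t s' with hp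
  rcases lt_trichotomy a' a with haa | rfl | haa
  · -- a' < a
    have hbb : b ≤ b' := fact_ii hS hε hyp hN₀ h haa.le
    have hmem : ((b' - b : ℕ):ℝ≥0∞) / ((a - a' : ℕ):ℝ≥0∞) ∈
        {u | ∃ a₁ b₁ a₁' b₁' : ℕ, ConB t s' a₁ b₁ a₁' b₁' ∧ a₁' < a₁ ∧
          u = ((b₁' - b₁ : ℕ):ℝ≥0∞) / ((a₁ - a₁' : ℕ):ℝ≥0∞)} :=
      ⟨a, b, a', b', h, haa, rfl⟩
    have hple : p ≤ ((b' - b : ℕ):ℝ≥0∞) / ((a - a' : ℕ):ℝ≥0∞) := sInf_le hmem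
    have hdne : ((a - a' : ℕ):ℝ≥0∞) ≠ 0 := by
      simp only [ne_eq, Nat.cast_eq_zero]; omega
    have hkey : ((a - a' : ℕ):ℝ≥0∞) * p ≤ ((b' - b : ℕ):ℝ≥0∞) := by
      calc ((a - a' : ℕ):ℝ≥0∞) * p
          ≤ ((a - a' : ℕ):ℝ≥0∞) * (((b' - b : ℕ):ℝ≥0∞) / ((a - a' : ℕ):ℝ≥0∞)) :=
            mul_le_mul_right hple _
      _ = ((b' - b : ℕ):ℝ≥0∞) := ENNReal.mul_div_cancel hdne (ENNReal.natCast_ne_top _)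
    have hacast : (a:ℝ≥0∞) = (a':ℝ≥0∞) + ((a-a':ℕ):ℝ≥0∞) := by
      rw [← Nat.cast_add]
      congr 1
      omega
    have hbcast : (b':ℝ≥0∞) = (b:ℝ≥0∞) + ((b'-b:ℕ):ℝ≥0∞) := by
      rw [← Nat.cast_add]
      congr 1
      omega
    rw [hacast, hbcast, add_mul]
    calc (a':ℝ≥0∞)*p + ((a-a':ℕ):ℝ≥0∞)*p + (b:ℝ≥0∞)
        ≤ (a':ℝ≥0∞)*p + ((b'-b:ℕ):ℝ≥0∞) + (b:ℝ≥0∞) := by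
          exact add_le_add_left (add_le_add_right hkey _) _
    _ = (a':ℝ≥0∞)*p + ((b:ℝ≥0∞) + ((b'-b:ℕ):ℝ≥0∞)) := by ring
  · -- a' = a
    have hbb : b ≤ b' := fact_i hS hε hyp hN₀ h
    exact add_le_add_right (by exact_mod_cast hbb) _
  · -- a < a'
    by_cases hbb : b ≤ b'
    · exact add_le_add (mul_le_mul_left (by exact_mod_cast haa.le) p)
        (by exact_mod_cast hbb)
    · push_neg at hbb
      set n : ℕ := a' - a with hn
      set m : ℕ := b - b' with hm
      have hnne : (n:ℝ≥0∞) ≠ 0 := by simp only [ne_eq, Nat.cast_eq_zero]; omega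
      have hkey : (m:ℝ≥0∞) ≤ (n:ℝ≥0∞) * p := by
        have hdiv : (m:ℝ≥0∞) / (n:ℝ≥0∞) ≤ p := by
          refine le_sInf ?_
          rintro u ⟨a₁, b₁, a₁', b₁', h₁, ha₁, rfl⟩
          set d₁ : ℕ := a₁ - a₁' with hd₁
          have hb₁ : b₁ ≤ b₁' := fact_ii hS hε hyp hN₀ h₁ ha₁.le
          have hcomb := conB_add hS (conB_smul hS d₁ h) (conB_smul hS n h₁)
          have hceq : d₁*a + n*a₁ = d₁*a' + n*a₁' := by
            have e1 : a' = a + n := by omega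
            have e2 : a₁ = a₁' + d₁ := by omega
            rw [e1, e2]; ring
          rw [hceq] at hcomb
          have hnum : d₁*b + n*b₁ ≤ d₁*b' + n*b₁' := fact_i hS hε hyp hN₀ hcomb
          -- derive d₁ * m ≤ n * (b₁' - b₁)
          have h1 : d₁*m + d₁*b' = d₁*b := by
            rw [← Nat.mul_add]; congr 1; omega
          have h2 : n*(b₁'-b₁) + n*b₁ = n*b₁' := by
            rw [← Nat.mul_add]; congr 1; omega
          have hnat : d₁*m ≤ n*(b₁'-b₁) := by
            have hstep : d₁*m + (d₁*b' + n*b₁) ≤ n*(b₁'-b₁) + (d₁*b' + n*b₁) := by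
              calc d₁*m + (d₁*b' + n*b₁) = (d₁*m + d₁*b') + n*b₁ := by ring
              _ = d₁*b + n*b₁ := by rw [h1]
              _ ≤ d₁*b' + n*b₁' := hnum
              _ = d₁*b' + (n*(b₁'-b₁) + n*b₁) := by rw [h2]
              _ = n*(b₁'-b₁) + (d₁*b' + n*b₁) := by ring
            exact Nat.le_of_add_le_add_right hstep
          have hd₁ne : ((d₁:ℕ):ℝ≥0∞) ≠ 0 := by
            simp only [ne_eq, Nat.cast_eq_zero]; omega
          rw [ENNReal.div_le_iff_le_mul (Or.inl hnne) (Or.inl (ENNReal.natCast_ne_top _))]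
          rw [div_eq_mul_inv, mul_right_comm, ← div_eq_mul_inv]
          rw [ENNReal.le_div_iff_mul_le (Or.inl hd₁ne) (Or.inl (ENNReal.natCast_ne_top _))]
          have hnat' : m*d₁ ≤ (b₁'-b₁)*n := by
            rw [Nat.mul_comm m d₁, Nat.mul_comm _ n]; exact hnat
          exact_mod_cast hnat'
        calc (m:ℝ≥0∞) = ((m:ℝ≥0∞) / (n:ℝ≥0∞)) * (n:ℝ≥0∞) := by
              rw [ENNReal.div_mul_cancel hnne (ENNReal.natCast_ne_top _)]
        _ ≤ p * (n:ℝ≥0∞) := mul_le_mul_left hdiv _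
        _ = (n:ℝ≥0∞) * p := mul_comm _ _
      have hacast : (a':ℝ≥0∞) = (a:ℝ≥0∞) + (n:ℝ≥0∞) := by
        rw [← Nat.cast_add]; congr 1; omega
      have hbcast : (b:ℝ≥0∞) = (b':ℝ≥0∞) + (m:ℝ≥0∞) := by
        rw [← Nat.cast_add]; congr 1; omega
      rw [hacast, hbcast, add_mul]
      calc (a:ℝ≥0∞)*p + ((b':ℝ≥0∞) + (m:ℝ≥0∞))
          ≤ (a:ℝ≥0∞)*p + ((b':ℝ≥0∞) + (n:ℝ≥0∞)*p) := by
            exact add_le_add_right (add_le_add_right hkey _) _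
      _ = (a:ℝ≥0∞)*p + (n:ℝ≥0∞)*p + (b':ℝ≥0∞) := by ring
end CaseBAux6
section States
variable {S : Type*} [AddCommMonoid S] [PartialOrder S]

/-- `r` is dominated by a multiple of `t`. -/
def Bdd (t r : S) : Prop := ∃ R : ℕ, r ≤ R • t

/-- partial states: graphs of additive, translation-monotone partial functions. -/
def StateSet (t : S) : Set (Set (S × ℝ≥0∞)) :=
  {G | ((0:S), (0:ℝ≥0∞)) ∈ G ∧
    (∀ x y : S × ℝ≥0∞, x ∈ G → y ∈ G → (x.1 + y.1, x.2 + y.2) ∈ G) ∧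
    (∀ x y : S × ℝ≥0∞, x ∈ G → y ∈ G → ∀ r : S, Bdd t r → x.1 + r ≤ y.1 + r → x.2 ≤ y.2) ∧
    (∀ x ∈ G, Bdd t x.1)}

lemma bdd_add (hS : CuO5 S) {t r r' : S} (h : Bdd t r) (h' : Bdd t r') : Bdd t (r + r') := by
  obtain ⟨R, hR⟩ := h; obtain ⟨R', hR'⟩ := h'
  exact ⟨R + R', by rw [add_nsmul]; exact add_le_add' hS hR hR'⟩

lemma bdd_nsmul (hS : CuO5 S) {t r : S} (h : Bdd t r) (k : ℕ) : Bdd t (k • r) := by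
  obtain ⟨R, hR⟩ := h
  exact ⟨k * R, by rw [mul_nsmul']; exact nsmul_le_nsmul' hS hR k⟩

lemma nsmulG {t : S} {G : Set (S × ℝ≥0∞)} (hG : G ∈ StateSet t)
    (a : S × ℝ≥0∞) (ha : a ∈ G) (k : ℕ) : (k • a.1, (k:ℝ≥0∞) * a.2) ∈ G := by
  induction k with
  | zero => simpa using hG.1
  | succ k ih =>
    have := hG.2.1 a (k • a.1, (k:ℝ≥0∞) * a.2) ha ih
    have heq : (a.1 + k • a.1, a.2 + (k:ℝ≥0∞) * a.2) = ((k+1) • a.1, ((k+1:ℕ):ℝ≥0∞) * a.2) := by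
      rw [Prod.ext_iff]
      constructor
      · simp only [succ_nsmul']
      · push_cast; ring
    rwa [heq] at this

lemma state_extend (hS : CuO5 S) {t : S} {G : Set (S × ℝ≥0∞)} (hG : G ∈ StateSet t)
    {x : S} (hx : Bdd t x) :
    ∃ c : ℝ≥0∞,
      {z : S × ℝ≥0∞ | ∃ a ∈ G, ∃ n : ℕ, z = (a.1 + n • x, a.2 + n * c)} ∈ StateSet t := by
  classical
  obtain ⟨Rx, hRx⟩ := hx
  set LB : Set ℝ≥0∞ := {q | ∃ a ∈ G, ∃ b ∈ G, ∃ n m : ℕ, ∃ r : S,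
    n < m ∧ Bdd t r ∧ a.1 + n • x + r ≤ b.1 + m • x + r ∧
    q = (a.2 - b.2) / ((m - n : ℕ):ℝ≥0∞)} with hLB
  set c : ℝ≥0∞ := sSup LB with hc
  have key : ∀ a ∈ G, ∀ b ∈ G, ∀ (n m : ℕ) (r : S), Bdd t r →
      a.1 + n • x + r ≤ b.1 + m • x + r → a.2 + n * c ≤ b.2 + m * c := by
    intro a ha b hb n m r hr hcon
    rcases lt_trichotomy n m with hnm | rfl | hnm
    · -- n < m
      have hq : (a.2 - b.2) / ((m - n : ℕ):ℝ≥0∞) ∈ LB :=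
        ⟨a, ha, b, hb, n, m, r, hnm, hr, hcon, rfl⟩
      have hcle : (a.2 - b.2) / ((m - n : ℕ):ℝ≥0∞) ≤ c := le_sSup hq
      have hmn0 : ((m - n : ℕ):ℝ≥0∞) ≠ 0 := by
        simp only [ne_eq, Nat.cast_eq_zero]; omega
      have h1 : a.2 - b.2 ≤ ((m - n : ℕ):ℝ≥0∞) * c := by
        calc a.2 - b.2
            = ((m-n:ℕ):ℝ≥0∞) * ((a.2 - b.2)/((m-n:ℕ):ℝ≥0∞)) :=
              (ENNReal.mul_div_cancel hmn0 (ENNReal.natCast_ne_top _)).symm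
        _ ≤ ((m-n:ℕ):ℝ≥0∞) * c := mul_le_mul_right hcle _
      have hcast : ((m-n:ℕ):ℝ≥0∞) + (n:ℝ≥0∞) = (m:ℝ≥0∞) := by
        rw [← Nat.cast_add]; congr 1; omega
      calc a.2 + n*c ≤ (b.2 + (a.2 - b.2)) + n*c := add_le_add_left le_add_tsub _
      _ ≤ (b.2 + ((m-n:ℕ):ℝ≥0∞)*c) + n*c := add_le_add_left (add_le_add_right h1 _) _
      _ = b.2 + (m:ℝ≥0∞)*c := by rw [add_assoc, ← add_mul, hcast]
    · -- n = m
      have hbdd : Bdd t (n • x + r) := bdd_add hS (bdd_nsmul hS ⟨Rx, hRx⟩ n) hr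
      have hcon' : a.1 + (n • x + r) ≤ b.1 + (n • x + r) := by
        rw [← add_assoc, ← add_assoc]; exact hcon
      exact add_le_add_left (hG.2.2.1 a b ha hb _ hbdd hcon') _
    · -- m < n
      have hbdd : Bdd t (n • x + r) := bdd_add hS (bdd_nsmul hS ⟨Rx, hRx⟩ n) hr
      have hcon2 : a.1 + (n • x + r) ≤ b.1 + (n • x + r) := by
        rw [← add_assoc, ← add_assoc]
        refine hcon.trans ?_
        exact add_le_add' hS (add_le_add' hS le_rfl (nsmul_le_nsmul_scalar hS hnm.le x)) le_rfl
      have hab : a.2 ≤ b.2 := hG.2.2.1 a b ha hb _ hbdd hcon2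
      by_cases hbtop : b.2 = ∞
      · rw [hbtop]; simp
      have hatop : a.2 ≠ ∞ := fun h => hbtop (top_le_iff.mp (h ▸ hab))
      have hβne : ((n - m : ℕ):ℝ≥0∞) ≠ 0 := by
        simp only [ne_eq, Nat.cast_eq_zero]; omega
      have hsup : c ≤ (b.2 - a.2) / ((n - m : ℕ):ℝ≥0∞) := by
        refine sSup_le ?_
        rintro q ⟨a', ha', b', hb', n', m', r', hn'm', hr', hcon', rfl⟩
        by_cases hq0 : a'.2 ≤ b'.2
        · rw [tsub_eq_zero_of_le hq0, ENNReal.zero_div]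
          exact zero_le
        push_neg at hq0
        obtain ⟨Rr, hRr⟩ := hr
        obtain ⟨Rr', hRr'⟩ := hr'
        set α : ℕ := m' - n' with hα
        set β : ℕ := n - m with hβ
        have hα1 : 1 ≤ α := by omega
        have hβ1 : 1 ≤ β := by omega
        -- combined elements
        have hA := hG.2.1 _ _ (nsmulG hG a ha α) (nsmulG hG a' ha' β)
        have hB := hG.2.1 _ _ (nsmulG hG b hb α) (nsmulG hG b' hb' β)
        -- combined constraint
        have hKeq : α*n + β*n' = α*m + β*m' := by
          have e1 : n = m + β := by omega
          have e2 : m' = n' + α := by omega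
          rw [e1, e2]; ring
        have hscaled := add_le_add' hS (nsmul_le_nsmul' hS hcon α) (nsmul_le_nsmul' hS hcon' β)
        have hL : α•(a.1 + n•x + r) + β•(a'.1 + n'•x + r')
            = (α•a.1 + β•a'.1) + (α*n + β*n')•x + (α•r + β•r') := by
          simp only [nsmul_add, add_nsmul, mul_nsmul']; abel
        have hR : α•(b.1 + m•x + r) + β•(b'.1 + m'•x + r')
            = (α•b.1 + β•b'.1) + (α*n + β*n')•x + (α•r + β•r') := by
          rw [hKeq]
          simp only [nsmul_add, add_nsmul, mul_nsmul']; abel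
        rw [hL, hR] at hscaled
        have hcomb : (α•a.1 + β•a'.1) + ((α*n + β*n')•x + (α•r + β•r'))
            ≤ (α•b.1 + β•b'.1) + ((α*n + β*n')•x + (α•r + β•r')) := by
          calc (α•a.1 + β•a'.1) + ((α*n + β*n')•x + (α•r + β•r'))
              = α•a.1 + β•a'.1 + (α*n + β*n')•x + (α•r + β•r') := by abel
          _ ≤ α•b.1 + β•b'.1 + (α*n + β*n')•x + (α•r + β•r') := hscaled
          _ = (α•b.1 + β•b'.1) + ((α*n + β*n')•x + (α•r + β•r')) := by abel
        have hbdd2 : Bdd t ((α*n + β*n')•x + (α•r + β•r')) :=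
          bdd_add hS (bdd_nsmul hS ⟨Rx, hRx⟩ _)
            (bdd_add hS (bdd_nsmul hS ⟨Rr, hRr⟩ α) (bdd_nsmul hS ⟨Rr', hRr'⟩ β))
        have hnum : (α:ℝ≥0∞)*a.2 + (β:ℝ≥0∞)*a'.2 ≤ (α:ℝ≥0∞)*b.2 + (β:ℝ≥0∞)*b'.2 :=
          hG.2.2.1 _ _ hA hB _ hbdd2 hcomb
        -- a'.2 finite
        have hαtop : (α:ℝ≥0∞) ≠ ∞ := ENNReal.natCast_ne_top _
        have hβtop : (β:ℝ≥0∞) ≠ ∞ := ENNReal.natCast_ne_top _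
        have hαne : (α:ℝ≥0∞) ≠ 0 := by simp only [ne_eq, Nat.cast_eq_zero]; omega
        have hβne' : (β:ℝ≥0∞) ≠ 0 := by simp only [ne_eq, Nat.cast_eq_zero]; omega
        have hb'top : b'.2 ≠ ∞ := fun h => (h ▸ hq0).ne_top rfl
        have ha'top : a'.2 ≠ ∞ := by
          intro h
          have hrhs : (α:ℝ≥0∞)*b.2 + (β:ℝ≥0∞)*b'.2 ≠ ∞ :=
            ENNReal.add_ne_top.mpr ⟨ENNReal.mul_ne_top hαtop hbtop,
              ENNReal.mul_ne_top hβtop hb'top⟩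
          have hlhs : (α:ℝ≥0∞)*a.2 + (β:ℝ≥0∞)*a'.2 = ∞ := by
            rw [h, ENNReal.mul_top hβne', add_top]
          exact hrhs (top_le_iff.mp (hlhs ▸ hnum))
        -- padded inequality
        have hfin : (α:ℝ≥0∞)*a.2 + (β:ℝ≥0∞)*b'.2 ≠ ∞ :=
          ENNReal.add_ne_top.mpr ⟨ENNReal.mul_ne_top hαtop hatop,
            ENNReal.mul_ne_top hβtop hb'top⟩
        have hpad : (β:ℝ≥0∞)*(a'.2 - b'.2) + ((α:ℝ≥0∞)*a.2 + (β:ℝ≥0∞)*b'.2)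
            ≤ (α:ℝ≥0∞)*(b.2 - a.2) + ((α:ℝ≥0∞)*a.2 + (β:ℝ≥0∞)*b'.2) := by
          calc (β:ℝ≥0∞)*(a'.2 - b'.2) + ((α:ℝ≥0∞)*a.2 + (β:ℝ≥0∞)*b'.2)
              = (α:ℝ≥0∞)*a.2 + ((β:ℝ≥0∞)*(a'.2 - b'.2) + (β:ℝ≥0∞)*b'.2) := by ring
          _ = (α:ℝ≥0∞)*a.2 + (β:ℝ≥0∞)*((a'.2 - b'.2) + b'.2) := by rw [mul_add]
          _ = (α:ℝ≥0∞)*a.2 + (β:ℝ≥0∞)*a'.2 := by rw [tsub_add_cancel_of_le hq0.le]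
          _ ≤ (α:ℝ≥0∞)*b.2 + (β:ℝ≥0∞)*b'.2 := hnum
          _ = (α:ℝ≥0∞)*((b.2 - a.2) + a.2) + (β:ℝ≥0∞)*b'.2 := by
              rw [tsub_add_cancel_of_le hab]
          _ = (α:ℝ≥0∞)*(b.2 - a.2) + ((α:ℝ≥0∞)*a.2 + (β:ℝ≥0∞)*b'.2) := by
              rw [mul_add]; ring
        have hmain : (β:ℝ≥0∞)*(a'.2 - b'.2) ≤ (α:ℝ≥0∞)*(b.2 - a.2) :=
          (ENNReal.add_le_add_iff_right hfin).mp hpad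
        -- conclude division inequality
        show (a'.2 - b'.2) / ((m'-n':ℕ):ℝ≥0∞) ≤ (b.2 - a.2) / ((n-m:ℕ):ℝ≥0∞)
        have hαcast : ((m' - n' : ℕ):ℝ≥0∞) = (α:ℝ≥0∞) := rfl
        have hβcast : ((n - m : ℕ):ℝ≥0∞) = (β:ℝ≥0∞) := rfl
        rw [hαcast, hβcast,
          ENNReal.div_le_iff_le_mul (Or.inl hαne) (Or.inl hαtop),
          div_eq_mul_inv, mul_right_comm, ← div_eq_mul_inv,
          ENNReal.le_div_iff_mul_le (Or.inl hβne') (Or.inl hβtop)]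
        calc (a'.2 - b'.2) * (β:ℝ≥0∞) = (β:ℝ≥0∞)*(a'.2 - b'.2) := mul_comm _ _
        _ ≤ (α:ℝ≥0∞)*(b.2 - a.2) := hmain
        _ = (b.2 - a.2) * (α:ℝ≥0∞) := mul_comm _ _
      have h2 : ((n-m:ℕ):ℝ≥0∞)*c ≤ b.2 - a.2 := by
        calc ((n-m:ℕ):ℝ≥0∞)*c ≤ ((n-m:ℕ):ℝ≥0∞)*((b.2 - a.2)/((n-m:ℕ):ℝ≥0∞)) :=
              mul_le_mul_right hsup _
        _ = b.2 - a.2 := ENNReal.mul_div_cancel hβne (ENNReal.natCast_ne_top _)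
      have hsplit : ((n:ℕ):ℝ≥0∞)*c = ((n-m:ℕ):ℝ≥0∞)*c + ((m:ℕ):ℝ≥0∞)*c := by
        rw [← add_mul, ← Nat.cast_add]
        congr 2
        omega
      calc a.2 + (n:ℝ≥0∞)*c = a.2 + (((n-m:ℕ):ℝ≥0∞)*c + (m:ℝ≥0∞)*c) := by rw [hsplit]
      _ ≤ a.2 + ((b.2 - a.2) + (m:ℝ≥0∞)*c) := add_le_add_right (add_le_add_left h2 _) _
      _ = (a.2 + (b.2 - a.2)) + (m:ℝ≥0∞)*c := by rw [add_assoc]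
      _ = b.2 + (m:ℝ≥0∞)*c := by rw [add_tsub_cancel_of_le hab]
  -- now verify G' is a partial state
  refine ⟨c, ?_, ?_, ?_, ?_⟩
  · exact ⟨(0,0), hG.1, 0, by simp⟩
  · rintro z w ⟨a, ha, n, rfl⟩ ⟨b, hb, m, rfl⟩
    refine ⟨(a.1 + b.1, a.2 + b.2), hG.2.1 a b ha hb, n + m, ?_⟩
    rw [Prod.ext_iff]
    constructor
    · simp only [add_nsmul]; abel
    · push_cast; ring
  · rintro z w ⟨a, ha, n, rfl⟩ ⟨b, hb, m, rfl⟩ r hr hcon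
    simp only at hcon ⊢
    have hcon' : a.1 + n • x + r ≤ b.1 + m • x + r := by
      have e1 : a.1 + n • x + r = a.1 + n • x + r := rfl
      exact hcon
    exact key a ha b hb n m r hr hcon'
  · rintro z ⟨a, ha, n, rfl⟩
    obtain ⟨Ra, hRa⟩ := hG.2.2.2 a ha
    exact bdd_add hS ⟨Ra, hRa⟩ (bdd_nsmul hS ⟨Rx, hRx⟩ n)
end States
section ZornState
variable {S : Type*} [AddCommMonoid S] [PartialOrder S]

lemma exists_total_state (hS : CuO5 S) (t : S) {G₀ : Set (S × ℝ≥0∞)}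
    (hG₀ : G₀ ∈ StateSet t) :
    ∃ μ : S → ℝ≥0∞, μ 0 = 0 ∧ (∀ x y, μ (x+y) = μ x + μ y) ∧
      (∀ {x y : S}, x ≤ y → μ x ≤ μ y) ∧ ∀ z ∈ G₀, μ z.1 = z.2 := by
  classical
  have hchain : ∀ ch ⊆ StateSet t, IsChain (· ⊆ ·) ch → ch.Nonempty →
      ∃ ub ∈ StateSet t, ∀ s ∈ ch, s ⊆ ub := by
    intro ch hchsub hch hchne
    refine ⟨⋃₀ ch, ⟨?_, ?_, ?_, ?_⟩, fun s hs => Set.subset_sUnion_of_mem hs⟩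
    · obtain ⟨G₁, hG₁⟩ := hchne
      exact ⟨G₁, hG₁, (hchsub hG₁).1⟩
    · rintro x y ⟨G₁, hG₁, hx⟩ ⟨G₂, hG₂, hy⟩
      rcases hch.total hG₁ hG₂ with hsub | hsub
      · exact ⟨G₂, hG₂, (hchsub hG₂).2.1 x y (hsub hx) hy⟩
      · exact ⟨G₁, hG₁, (hchsub hG₁).2.1 x y hx (hsub hy)⟩
    · rintro x y ⟨G₁, hG₁, hx⟩ ⟨G₂, hG₂, hy⟩ r hr hcon
      rcases hch.total hG₁ hG₂ with hsub | hsub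
      · exact (hchsub hG₂).2.2.1 x y (hsub hx) hy r hr hcon
      · exact (hchsub hG₁).2.2.1 x y hx (hsub hy) r hr hcon
    · rintro x ⟨G₁, hG₁, hx⟩
      exact (hchsub hG₁).2.2.2 x hx
  obtain ⟨M, hM0sub, hMmax⟩ := zorn_subset_nonempty (StateSet t) hchain G₀ hG₀
  have hM : M ∈ StateSet t := hMmax.1
  -- totality on the ideal
  have hdom : ∀ x : S, Bdd t x → ∃ v, (x, v) ∈ M := by
    intro x hx
    by_contra hnd
    push_neg at hnd
    obtain ⟨c, hG'⟩ := state_extend hS hM hx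
    have hsub : M ⊆ {z : S × ℝ≥0∞ | ∃ a ∈ M, ∃ n : ℕ, z = (a.1 + n • x, a.2 + n * c)} := by
      intro z hz
      exact ⟨z, hz, 0, by simp⟩
    have hsub' := hMmax.2 hG' hsub
    have hxc : (x, c) ∈ M := hsub' ⟨(0,0), hM.1, 1, by simp⟩
    exact hnd c hxc
  have huniq : ∀ z v w : ℝ≥0∞, ∀ x : S, (x, v) ∈ M → (x, w) ∈ M → v = w := by
    intro _ v w x hv hw
    have hb : Bdd t (0:S) := ⟨0, by simp⟩
    have h1 := hM.2.2.1 (x,v) (x,w) hv hw 0 hb (le_refl (x + 0))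
    have h2 := hM.2.2.1 (x,w) (x,v) hw hv 0 hb (le_refl (x + 0))
    exact le_antisymm h1 h2
  set μ : S → ℝ≥0∞ := fun z => if h : ∃ v, (z, v) ∈ M then h.choose else ∞ with hμ
  have hμspec : ∀ z v, (z, v) ∈ M → μ z = v := by
    intro z v hzv
    have h : ∃ v, (z, v) ∈ M := ⟨v, hzv⟩
    rw [hμ]
    simp only [dif_pos h]
    exact huniq 0 _ _ z h.choose_spec hzv
  have hμinf : ∀ z : S, ¬ Bdd t z → μ z = ∞ := by
    intro z hz
    have hne : ¬ ∃ v, (z, v) ∈ M := by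
      rintro ⟨v, hv⟩
      exact hz (hM.2.2.2 (z,v) hv)
    simp only [hμ, dif_neg hne]
  have hbdd_of : ∀ x y : S, x ≤ y → Bdd t y → Bdd t x := by
    rintro x y hxy ⟨R, hR⟩
    exact ⟨R, hxy.trans hR⟩
  refine ⟨μ, hμspec 0 0 hM.1, ?_, ?_, ?_⟩
  · intro x y
    by_cases hx : Bdd t x
    · by_cases hy : Bdd t y
      · obtain ⟨vx, hvx⟩ := hdom x hx
        obtain ⟨vy, hvy⟩ := hdom y hy
        have hsum := hM.2.1 (x,vx) (y,vy) hvx hvy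
        rw [hμspec x vx hvx, hμspec y vy hvy, hμspec (x+y) (vx+vy) hsum]
      · have hxy : ¬ Bdd t (x+y) := fun hb => hy (hbdd_of y (x+y) (le_add_self' hS y x) hb)
        rw [hμinf y hy, hμinf (x+y) hxy, add_top]
    · have hxy : ¬ Bdd t (x+y) := fun hb => hx (hbdd_of x (x+y) (le_add_self'' hS x y) hb)
      rw [hμinf x hx, hμinf (x+y) hxy, top_add]
  · intro x y hxy
    by_cases hy : Bdd t y
    · have hx : Bdd t x := hbdd_of x y hxy hy
      obtain ⟨vx, hvx⟩ := hdom x hx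
      obtain ⟨vy, hvy⟩ := hdom y hy
      rw [hμspec x vx hvx, hμspec y vy hvy]
      refine hM.2.2.1 (x,vx) (y,vy) hvx hvy 0 ⟨0, by simp⟩ ?_
      simpa using hxy
    · rw [hμinf y hy]; exact le_top
  · intro z hz
    exact hμspec z.1 z.2 (hM0sub (by simpa using hz))
end ZornState
section Final
variable {S : Type*} [AddCommMonoid S] [PartialOrder S]

lemma caseB (hS : CuO5 S) (s t s' : S) (hs' : CC s' s) (ε : ℝ) (hε : 0 < ε)
    (hyp : ∀ M N : ℕ, 0 < M → 0 < N → M • s' ≤ N • t → (M:ℝ)/(N:ℝ) ≤ 1 - ε)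
    (N₀ : ℕ) (hN₀ : s' ≤ N₀ • t) :
    ∃ l : S → ℝ≥0∞, IsFunctional l ∧ ¬ l s ≤ l t := by
  rcases Nat.eq_zero_or_pos N₀ with rfl | hN₀pos
  · exfalso
    have h0 : s' ≤ 0 := by simpa using hN₀
    have hss : (2:ℕ) • s' ≤ 1 • t := by
      calc (2:ℕ)•s' ≤ (2:ℕ)•(0:S) := nsmul_le_nsmul' hS h0 2
      _ = 0 := by simp
      _ ≤ 1•t := hS.zeroLe _
    have h2 := hyp 2 1 two_pos Nat.one_pos hss
    norm_num at h2
    linarith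
  have h1ε : 0 < 1 - ε := by
    have h1 := hyp 1 N₀ Nat.one_pos hN₀pos (by simpa using hN₀)
    have h2 : (0:ℝ) < 1/(N₀:ℝ) := by
      have : (0:ℝ) < (N₀:ℝ) := by exact_mod_cast hN₀pos
      positivity
    calc (0:ℝ) < 1/(N₀:ℝ) := h2
    _ = (1:ℝ)/(N₀:ℝ) := rfl
    _ ≤ 1 - ε := by simpa using h1
  set p : ℝ≥0∞ := pConB t s' with hpdef
  have hp1 : 1 < p := p_gt_one hS hε h1ε hyp hN₀
  set G₀ : Set (S × ℝ≥0∞) :=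
    {z | ∃ a b : ℕ, z = (a•s' + b•t, (a:ℝ≥0∞)*p + (b:ℝ≥0∞))} with hG₀def
  have hG₀ : G₀ ∈ StateSet t := by
    refine ⟨⟨0, 0, by simp⟩, ?_, ?_, ?_⟩
    · rintro z w ⟨a₁, b₁, rfl⟩ ⟨a₂, b₂, rfl⟩
      refine ⟨a₁+a₂, b₁+b₂, ?_⟩
      rw [Prod.ext_iff]
      constructor
      · simp only [add_nsmul]; abel
      · push_cast; ring
    · rintro z w ⟨a, b, rfl⟩ ⟨a', b', rfl⟩ r hr hcon
      exact p_main hS hε hyp hN₀ ⟨r, hr, hcon⟩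
    · rintro z ⟨a, b, rfl⟩
      refine ⟨a*N₀+b, ?_⟩
      have := bound_t hS hN₀ a b 1
      simpa using this
  obtain ⟨μ, hμ0, hμadd, hμmono, hμG₀⟩ := exists_total_state hS t hG₀
  have hμs' : μ s' = p := by
    have hmem : (s', p) ∈ G₀ := ⟨1, 0, by simp⟩
    simpa using hμG₀ (s', p) hmem
  have hμt : μ t = 1 := by
    have hmem : (t, (1:ℝ≥0∞)) ∈ G₀ := ⟨0, 1, by simp⟩
    simpa using hμG₀ (t, 1) hmem
  refine ⟨_, smoothing hS μ hμ0 hμadd hμmono, ?_⟩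
  intro hle
  have h1 : p ≤ ⨆ z : {z : S // CC z s}, μ z.1 := by
    have h2 := le_iSup (fun z : {z : S // CC z s} => μ z.1) ⟨s', hs'⟩
    rw [hμs'] at h2
    exact h2
  have h2 : (⨆ z : {z : S // CC z t}, μ z.1) ≤ 1 := by
    refine iSup_le ?_
    rintro ⟨z, hz⟩
    exact (hμmono (cc_le hz)).trans_eq hμt
  exact absurd (h1.trans (hle.trans h2)) (not_le.mpr hp1)
end Final
/-- comparison by all functionals is equivalent to almost algebraic
comparison of multiples. -/
theorem functional_comparison_iff {S : Type*} [AddCommMonoid S] [PartialOrder S]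
    (hS : CuO5 S) (s t : S) :
    (∀ l : S → ℝ≥0∞, IsFunctional l → l s ≤ l t) ↔
      ∀ ε : ℝ, 0 < ε → ∀ s' : S, CC s' s →
        ∃ M N : ℕ, 0 < M ∧ 0 < N ∧ (1 - ε : ℝ) < (M : ℝ) / (N : ℝ) ∧ M • s' ≤ N • t := by
  constructor
  · intro hl
    by_contra hc
    push_neg at hc
    obtain ⟨ε, hε, s', hs', hfail⟩ := hc
    have hyp : ∀ M N : ℕ, 0 < M → 0 < N → M • s' ≤ N • t → (M:ℝ)/(N:ℝ) ≤ 1 - ε := by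
      intro M N hM hN hle
      by_contra hgt
      push_neg at hgt
      exact hfail M N hM hN hgt hle
    by_cases hB : ∃ N : ℕ, s' ≤ N • t
    · obtain ⟨N₀, hN₀⟩ := hB
      obtain ⟨l, hlf, hlst⟩ := caseB hS s t s' hs' ε hε hyp N₀ hN₀
      exact hlst (hl l hlf)
    · push_neg at hB
      obtain ⟨l, hlf, hlst⟩ := caseA hS s t s' hs' hB
      exact hlst (hl l hlf)
  · exact fun h l hl => easy_dir hS s t h l hl
end
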